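/- arXiv:2603.13207 — 5 statements merged into one kernel-verified Lean document; each statement's English description precedes it below -/
import Mathlib

section
/- The trigamma function has the integral representation ψ'(z) = ∫_0^∞ t e^{-tz}/(1 - e^{-t}) dt for all real z > 0. -/
open MeasureTheory Real

/-- The trigamma function: second derivative of `log ∘ Γ`. -/
noncomputable def trigamma (z : ℝ) : ℝ :=
  iteratedDeriv 2 (fun x => Real.log (Real.Gamma x)) z

section TrigammaAux

open Filter Topology Set

noncomputable section TrigammaAux

/-- Summability of `1/(x+m)^2`. -/
lemma trig_summable {x : ℝ} (hx : 0 < x) : Summable (fun m : ℕ => ((x + m) ^ 2)⁻¹) := by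
  rw [← summable_nat_add_iff 1]
  have h2 : Summable (fun m : ℕ => (((m : ℝ) + 1) ^ 2)⁻¹) := by
    have := (summable_nat_add_iff 1).mpr
      ((Real.summable_one_div_nat_pow (p := 2)).mpr one_lt_two)
    simpa [one_div] using this
  refine h2.of_nonneg_of_le (fun m => by positivity) (fun m => ?_)
  have h1 : ((m : ℝ) + 1) ≤ x + (m + 1 : ℕ) := by push_cast; linarith
  have h0 : (0:ℝ) < (m:ℝ) + 1 := by positivity
  gcongr

/-- The digamma-like limit function. -/
def psi1 (x : ℝ) : ℝ :=
  -Real.eulerMascheroniConstant - x⁻¹ + ∑' m : ℕ, (((m : ℝ) + 1)⁻¹ - (x + m + 1)⁻¹)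

/-- The trigamma series. -/
def psi2 (x : ℝ) : ℝ := ∑' m : ℕ, ((x + m) ^ 2)⁻¹

lemma tuo_of_nhds {F : ℕ → ℝ → ℝ} {f : ℝ → ℝ} {s : Set ℝ}
    (h : ∀ x ∈ s, ∃ t ∈ nhdsWithin x s, TendstoUniformlyOn F f atTop t) :
    TendstoLocallyUniformlyOn F f atTop s := by
  intro u hu x hx
  obtain ⟨t, ht, htu⟩ := h x hx
  exact ⟨t, ht, htu u hu⟩

lemma tuo_shift {F : ℕ → ℝ → ℝ} {f : ℝ → ℝ} {s : Set ℝ}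
    (h : TendstoUniformlyOn F f atTop s) :
    TendstoUniformlyOn (fun n => F (n + 1)) f atTop s := fun u hu =>
  (tendsto_add_atTop_nat 1).eventually (h u hu)

lemma tuo_self (f : ℝ → ℝ) (s : Set ℝ) :
    TendstoUniformlyOn (fun _ : ℕ => f) f atTop s := fun u hu =>
  Eventually.of_forall fun _ y _ => refl_mem_uniformity hu

/-- Locally uniform convergence of the derivatives of `logGammaSeq`. -/
lemma tlu_G : TendstoLocallyUniformlyOn
    (fun (n : ℕ) (x : ℝ) => Real.log n - ∑ m ∈ Finset.range (n + 1), (x + m)⁻¹)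
    psi1 atTop (Ioi 0) := by
  apply tuo_of_nhds
  intro x₀ hx₀
  have hx0 : (0 : ℝ) < x₀ := hx₀
  refine ⟨Ioo 0 (x₀ + 1), nhdsWithin_le_nhds (Ioo_mem_nhds hx0 (by linarith)), ?_⟩
  -- summable bound
  have hs : Summable (fun m : ℕ => (x₀ + 1) * ((((m : ℝ) + 1)) ^ 2)⁻¹) := by
    have := (trig_summable (x := (1 : ℝ)) one_pos).mul_left (x₀ + 1)
    simpa [add_comm (1 : ℝ)] using this
  have hb : ∀ (m : ℕ) (y : ℝ), y ∈ Ioo 0 (x₀ + 1) →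
      ‖(((m : ℝ) + 1)⁻¹ - (y + m + 1)⁻¹)‖ ≤ (x₀ + 1) * ((((m : ℝ) + 1)) ^ 2)⁻¹ := by
    intro m y hy
    obtain ⟨hy0, hy1⟩ := hy
    have h1 : (0 : ℝ) < (m : ℝ) + 1 := by positivity
    have h2 : (0 : ℝ) < y + m + 1 := by positivity
    have heq : ((m : ℝ) + 1)⁻¹ - (y + m + 1)⁻¹ = y * ((((m : ℝ) + 1)) * (y + m + 1))⁻¹ := by
      field_simp
      ring
    rw [heq, Real.norm_eq_abs, abs_of_nonneg (by positivity)]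
    calc y * ((((m : ℝ) + 1)) * (y + m + 1))⁻¹
        ≤ (x₀ + 1) * ((((m : ℝ) + 1)) * ((m : ℝ) + 1))⁻¹ := by
          gcongr <;> linarith
      _ = (x₀ + 1) * ((((m : ℝ) + 1)) ^ 2)⁻¹ := by rw [sq]
  have hT := tendstoUniformlyOn_tsum_nat hs hb
  -- constant part tends to -γ
  have hA : Tendsto (fun n : ℕ => Real.log n - (harmonic n : ℝ)) atTop
      (𝓝 (-Real.eulerMascheroniConstant)) := by
    have := Real.tendsto_harmonic_sub_log.neg
    simpa [neg_sub] using this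
  have hmain : TendstoUniformlyOn
      (fun (n : ℕ) (y : ℝ) => (Real.log n - (harmonic n : ℝ)) +
        (-y⁻¹ + ∑ m ∈ Finset.range n, (((m : ℝ) + 1)⁻¹ - (y + m + 1)⁻¹)))
      (fun y => -Real.eulerMascheroniConstant +
        (-y⁻¹ + ∑' m : ℕ, (((m : ℝ) + 1)⁻¹ - (y + m + 1)⁻¹)))
      atTop (Ioo 0 (x₀ + 1)) :=
    (hA.tendstoUniformlyOn_const _).add ((tuo_self (fun y => -y⁻¹) _).add hT)
  have hpsi : ∀ y : ℝ, psi1 y = -Real.eulerMascheroniConstant +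
      (-y⁻¹ + ∑' m : ℕ, (((m : ℝ) + 1)⁻¹ - (y + m + 1)⁻¹)) := by
    intro y; rw [psi1]; ring
  have hkey : ∀ (n : ℕ) (y : ℝ),
      (Real.log n - (harmonic n : ℝ)) +
        (-y⁻¹ + ∑ m ∈ Finset.range n, (((m : ℝ) + 1)⁻¹ - (y + m + 1)⁻¹)) =
      Real.log n - ∑ m ∈ Finset.range (n + 1), (y + m)⁻¹ := by
    intro n y
    have hH : (harmonic n : ℝ) = ∑ m ∈ Finset.range n, ((m : ℝ) + 1)⁻¹ := by
      rw [harmonic]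
      push_cast
      rfl
    rw [Finset.sum_range_succ', Finset.sum_sub_distrib, hH]
    push_cast
    have haux : ∑ m ∈ Finset.range n, (y + ((m : ℝ) + 1))⁻¹
        = ∑ m ∈ Finset.range n, (y + (m : ℝ) + 1)⁻¹ :=
      Finset.sum_congr rfl fun _ _ => by rw [add_assoc]
    rw [haux]
    ring
  refine TendstoUniformlyOn.congr ?_ (Eventually.of_forall fun n y _ => hkey n y)
  refine hmain.congr_right fun y _ => (hpsi y).symm

/-- Locally uniform convergence of the second derivatives. -/
lemma tlu_H : TendstoLocallyUniformlyOn
    (fun (n : ℕ) (x : ℝ) => ∑ m ∈ Finset.range (n + 1), ((x + m) ^ 2)⁻¹)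
    psi2 atTop (Ioi 0) := by
  apply tuo_of_nhds
  intro x hx
  have hx0 : (0 : ℝ) < x := hx
  refine ⟨Ioi (x / 2), nhdsWithin_le_nhds (Ioi_mem_nhds (by linarith)), ?_⟩
  have hs := trig_summable (x := x / 2) (by linarith)
  have hb : ∀ (m : ℕ) (y : ℝ), y ∈ Ioi (x / 2) → ‖((y + m) ^ 2)⁻¹‖ ≤ ((x / 2 + m) ^ 2)⁻¹ := by
    intro m y hy
    have hy' : x / 2 < y := hy
    have h1 : (0 : ℝ) < x / 2 + m := by positivity
    rw [Real.norm_eq_abs, abs_of_nonneg (by positivity)]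
    gcongr
  exact tuo_shift (tendstoUniformlyOn_tsum_nat hs hb)

lemma hasDerivAt_logGamma {x : ℝ} (hx : 0 < x) :
    HasDerivAt (fun x => Real.log (Real.Gamma x)) (psi1 x) x := by
  refine hasDerivAt_of_tendstoLocallyUniformlyOn isOpen_Ioi tlu_G
    (f := fun (n : ℕ) (y : ℝ) =>
      y * Real.log n + Real.log (Nat.factorial n : ℝ) - ∑ m ∈ Finset.range (n + 1), Real.log (y + m))
    ?_ ?_ (mem_Ioi.mpr hx)
  · refine Eventually.of_forall fun n y hy => ?_
    have hy0 : (0 : ℝ) < y := hy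
    have h1 : HasDerivAt (fun y : ℝ => y * Real.log n + Real.log (Nat.factorial n : ℝ)) (Real.log n) y := by
      simpa using ((hasDerivAt_id y).mul_const (Real.log n)).add_const (Real.log (Nat.factorial n : ℝ))
    have hsum : HasDerivAt (fun y : ℝ => ∑ m ∈ Finset.range (n + 1), Real.log (y + m))
        (∑ m ∈ Finset.range (n + 1), (y + m)⁻¹) y := by
      refine HasDerivAt.fun_sum fun m _ => ?_
      have hne : y + (m : ℝ) ≠ 0 := by positivity
      simpa [one_div] using ((hasDerivAt_id y).add_const (m : ℝ)).log hne
    exact h1.sub hsum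
  · intro y hy
    exact
      Real.BohrMollerup.tendsto_log_gamma (mem_Ioi.mp hy)

lemma hasDerivAt_psi1 {x : ℝ} (hx : 0 < x) : HasDerivAt psi1 (psi2 x) x := by
  refine hasDerivAt_of_tendstoLocallyUniformlyOn isOpen_Ioi tlu_H
    (f := fun (n : ℕ) (y : ℝ) => Real.log n - ∑ m ∈ Finset.range (n + 1), (y + m)⁻¹)
    ?_ ?_ (mem_Ioi.mpr hx)
  · refine Eventually.of_forall fun n y hy => ?_
    have hy0 : (0 : ℝ) < y := hy
    have hsum : HasDerivAt (fun y : ℝ => ∑ m ∈ Finset.range (n + 1), (y + m)⁻¹)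
        (∑ m ∈ Finset.range (n + 1), (-1 / (y + m) ^ 2)) y := by
      refine HasDerivAt.fun_sum fun m _ => ?_
      have hne : y + (m : ℝ) ≠ 0 := by positivity
      simpa using ((hasDerivAt_id y).add_const (m : ℝ)).fun_inv hne
    have h := (hasDerivAt_const y (Real.log n)).fun_sub hsum
    have heq : Real.log ↑n - ∑ m ∈ Finset.range (n + 1), (-1 / (y + m) ^ 2)
        = Real.log ↑n - ∑ m ∈ Finset.range (n + 1), (-1 / (y + m) ^ 2) := rfl
    simpa [neg_div, Finset.sum_neg_distrib, one_div, zero_sub, neg_neg] using h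
  · exact fun y hy => tlu_G.tendsto_at hy

lemma trigamma_eq_psi2 {z : ℝ} (hz : 0 < z) :
    iteratedDeriv 2 (fun x => Real.log (Real.Gamma x)) z = psi2 z := by
  rw [iteratedDeriv_succ, iteratedDeriv_one]
  have h1 : deriv (fun x => Real.log (Real.Gamma x)) =ᶠ[nhds z] psi1 := by
    filter_upwards [Ioi_mem_nhds hz] with x hx
    exact (hasDerivAt_logGamma hx).deriv
  rw [h1.deriv_eq, (hasDerivAt_psi1 hz).deriv]

lemma integral_mul_exp_neg_mul {a : ℝ} (ha : 0 < a) :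
    (∫ t in Ioi (0 : ℝ), t * Real.exp (-(a * t))) = (a ^ 2)⁻¹ ∧
      IntegrableOn (fun t => t * Real.exp (-(a * t))) (Ioi (0 : ℝ)) := by
  set g : ℝ → ℝ := fun t => -((a * t + 1) / a ^ 2) * Real.exp (-(a * t)) with hg
  have hderiv : ∀ t ∈ Ici (0 : ℝ), HasDerivAt g (t * Real.exp (-(a * t))) t := by
    intro t _
    have hu : HasDerivAt (fun t : ℝ => -((a * t + 1) / a ^ 2)) (-(a / a ^ 2)) t := by
      simpa using ((((hasDerivAt_id t).const_mul a).add_const 1).div_const (a ^ 2)).fun_neg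
    have hv : HasDerivAt (fun t : ℝ => Real.exp (-(a * t)))
        (Real.exp (-(a * t)) * (-(a * 1))) t :=
      (((hasDerivAt_id t).const_mul a).neg).exp
    have h := hu.fun_mul hv
    convert h using 1
    case e'_4 => rfl
    case e'_5 => rfl
    have ha' : a ≠ 0 := ha.ne'
    field_simp
    ring
  have hnonneg : ∀ t ∈ Ioi (0 : ℝ), 0 ≤ t * Real.exp (-(a * t)) := fun t ht =>
    mul_nonneg (le_of_lt ht) (Real.exp_nonneg _)
  have hlim : Tendsto g atTop (𝓝 0) := by
    have houter : Tendsto (fun t : ℝ => a * t) atTop atTop :=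
      Tendsto.const_mul_atTop ha tendsto_id
    have h1 : Tendsto (fun s : ℝ => s * Real.exp (-s)) atTop (𝓝 0) := by
      simpa using tendsto_pow_mul_exp_neg_atTop_nhds_zero 1
    have h2 : Tendsto (fun s : ℝ => Real.exp (-s)) atTop (𝓝 0) :=
      Real.tendsto_exp_neg_atTop_nhds_zero
    have hinner : Tendsto (fun s : ℝ => -((s + 1) / a ^ 2) * Real.exp (-s)) atTop (𝓝 0) := by
      have h3 := ((h1.add h2).const_mul (-(1 / a ^ 2)))
      simp only [add_zero, mul_zero] at h3
      refine h3.congr fun s => ?_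
      field_simp
    have := hinner.comp houter
    simpa [Function.comp_def, hg] using this
  constructor
  · have := integral_Ioi_of_hasDerivAt_of_nonneg' hderiv hnonneg hlim
    rw [this, hg]
    have ha' : a ≠ 0 := ha.ne'
    simp
  · exact integrableOn_Ioi_deriv_of_nonneg' hderiv hnonneg hlim

lemma integral_eq_psi2 {z : ℝ} (hz : 0 < z) :
    (∫ t in Set.Ioi (0 : ℝ), t * Real.exp (-t * z) / (1 - Real.exp (-t))) = psi2 z := by
  set f : ℕ → ℝ → ℝ := fun n t => t * Real.exp (-((z + n) * t)) with hf
  have hpos : ∀ n : ℕ, (0 : ℝ) < z + n := fun n => by positivity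
  have hint := fun n : ℕ => integral_mul_exp_neg_mul (hpos n)
  set μ := volume.restrict (Ioi (0 : ℝ)) with hμ
  have hmeas : ∀ n, AEStronglyMeasurable (f n) μ := by
    intro n
    exact (continuous_id.mul ((continuous_const.mul continuous_id).neg.rexp)).aestronglyMeasurable
  have hlint : ∀ n, (∫⁻ t, ‖f n t‖₊ ∂μ) = ENNReal.ofReal (((z + n) ^ 2)⁻¹) := by
    intro n
    have hnn : 0 ≤ᵐ[μ] f n := by
      refine (ae_restrict_iff' measurableSet_Ioi).mpr ?_
      exact Eventually.of_forall fun t ht =>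
        mul_nonneg (le_of_lt ht) (Real.exp_nonneg _)
    rw [← (hint n).1, ofReal_integral_eq_lintegral_ofReal (hint n).2 hnn]
    refine lintegral_congr_ae ?_
    filter_upwards [hnn] with t ht
    exact Real.enorm_eq_ofReal ht
  have hsum : Summable (fun n : ℕ => ((z + n) ^ 2)⁻¹) := trig_summable hz
  have hf' : (∑' n, ∫⁻ t, ‖f n t‖₊ ∂μ) ≠ ⊤ := by
    simp_rw [hlint]
    rw [← ENNReal.ofReal_tsum_of_nonneg (fun n => by positivity) hsum]
    exact ENNReal.ofReal_ne_top
  have hswap := integral_tsum hmeas hf'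
  have hL : (∫ t in Set.Ioi (0 : ℝ), t * Real.exp (-t * z) / (1 - Real.exp (-t)))
      = ∫ t, (∑' n, f n t) ∂μ := by
    rw [hμ]
    refine setIntegral_congr_fun measurableSet_Ioi fun t ht => ?_
    have ht0 : (0 : ℝ) < t := ht
    have hr0 : (0 : ℝ) ≤ Real.exp (-t) := Real.exp_nonneg _
    have hr1 : Real.exp (-t) < 1 := Real.exp_lt_one_iff.mpr (by linarith)
    have hterm : ∀ n : ℕ, f n t = (t * Real.exp (-t * z)) * Real.exp (-t) ^ n := by
      intro n
      have harg : -((z + n) * t) = -t * z + n * (-t) := by ring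
      rw [hf]
      simp only
      rw [harg, Real.exp_add, Real.exp_nat_mul]
      ring
    rw [tsum_congr hterm, tsum_mul_left, tsum_geometric_of_lt_one hr0 hr1,
      div_eq_mul_inv]
  rw [hL, hswap, psi2]
  exact tsum_congr fun n => (hint n).1

end TrigammaAux

/-- Integral representation of the trigamma function:
`ψ'(z) = ∫_0^∞ t * exp (-t z) / (1 - exp (-t)) dt` for `z > 0`. -/
theorem trigamma_integral_repr (z : ℝ) (hz : 0 < z) :
    trigamma z = ∫ t in Set.Ioi (0 : ℝ), t * Real.exp (-t * z) / (1 - Real.exp (-t)) := by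
  rw [trigamma, trigamma_eq_psi2 hz, integral_eq_psi2 hz]
end TrigammaAux
end

section
/- For all real z > 0, one has z·ψ'(z) > 1, equivalently z ψ'(z) - 1 = ∫_0^∞ (e^t - 1 - t)/((e^t - 1)(1 - e^{-t})) · e^{-tz} dt > 0. -/
open MeasureTheory Real

namespace TriAux

open Filter Topology Set

noncomputable def dlg (n : ℕ) (x : ℝ) : ℝ :=
  Real.log n - ∑ m ∈ Finset.range (n + 1), (x + m)⁻¹

noncomputable def ddlg (n : ℕ) (x : ℝ) : ℝ :=
  ∑ m ∈ Finset.range (n + 1), ((x + (m : ℝ)) ^ 2)⁻¹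

noncomputable def psi (x : ℝ) : ℝ :=
  -Real.eulerMascheroniConstant - x⁻¹ + ∑' m : ℕ, x * (((m : ℝ) + 1) * (x + m + 1))⁻¹

noncomputable def T (x : ℝ) : ℝ := ∑' m : ℕ, ((x + (m : ℝ)) ^ 2)⁻¹

lemma summable_inv_sq_add {a : ℝ} (ha : 0 < a) :
    Summable fun m : ℕ => ((a + m) ^ 2)⁻¹ := by
  have hbase : Summable fun m : ℕ => (((m : ℝ) + 1) ^ 2)⁻¹ := by
    have := Real.summable_one_div_nat_pow.mpr (le_refl 2)
    simpa [one_div] using (summable_nat_add_iff 1).mpr this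
  set c := min a 1 with hc
  have hc0 : 0 < c := lt_min ha one_pos
  refine Summable.of_nonneg_of_le (fun m => by positivity)
    (fun m => ?_) (hbase.mul_left ((c ^ 2)⁻¹))
  have h1 : c * ((m : ℝ) + 1) ≤ a + m := by
    have : c ≤ 1 := min_le_right _ _
    nlinarith [min_le_left a 1, (Nat.cast_nonneg m : (0:ℝ) ≤ m)]
  have h2 : (0:ℝ) < c * ((m : ℝ) + 1) := by positivity
  have := pow_le_pow_left₀ h2.le h1 2
  calc ((a + m) ^ 2)⁻¹ ≤ ((c * ((m:ℝ)+1)) ^ 2)⁻¹ := by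
        exact inv_anti₀ (by positivity) this
    _ = (c ^ 2)⁻¹ * (((m : ℝ) + 1) ^ 2)⁻¹ := by rw [mul_pow, mul_inv]

lemma summable_aux {x : ℝ} (hx : 0 < x) :
    Summable fun m : ℕ => x * (((m : ℝ) + 1) * (x + m + 1))⁻¹ := by
  have hbase : Summable fun m : ℕ => (((m : ℝ) + 1) ^ 2)⁻¹ := by
    have := Real.summable_one_div_nat_pow.mpr (le_refl 2)
    simpa [one_div] using (summable_nat_add_iff 1).mpr this
  refine Summable.of_nonneg_of_le (fun m => by positivity) (fun m => ?_) (hbase.mul_left x)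
  have h1 : ((m : ℝ) + 1) * ((m : ℝ) + 1) ≤ ((m : ℝ) + 1) * (x + m + 1) := by nlinarith [(Nat.cast_nonneg m : (0:ℝ) ≤ m)]
  calc x * (((m : ℝ) + 1) * (x + m + 1))⁻¹ ≤ x * (((m : ℝ) + 1) * ((m : ℝ)+1))⁻¹ := by
        refine mul_le_mul_of_nonneg_left (inv_anti₀ (by positivity) h1) hx.le
    _ = x * (((m : ℝ) + 1) ^ 2)⁻¹ := by ring

lemma hasDerivAt_logGammaSeq (n : ℕ) {x : ℝ} (hx : 0 < x) :
    HasDerivAt (fun y => Real.BohrMollerup.logGammaSeq y n) (dlg n x) x := by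
  have h1 : HasDerivAt (fun y : ℝ => y * Real.log n + Real.log (Nat.factorial n)) (Real.log n) x := by
    simpa using ((hasDerivAt_id x).mul_const (Real.log n)).add_const (Real.log (Nat.factorial n))
  have h2 : HasDerivAt (fun y : ℝ => ∑ m ∈ Finset.range (n + 1), Real.log (y + m))
      (∑ m ∈ Finset.range (n + 1), (x + m)⁻¹) x := by
    refine HasDerivAt.fun_sum fun m _ => ?_
    have hne : x + (m : ℝ) ≠ 0 := by positivity
    simpa [one_div] using (((hasDerivAt_id x).add_const (m : ℝ)).log hne)
  have h3 := h1.sub h2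
  have : (fun y => Real.BohrMollerup.logGammaSeq y n)
      = fun y : ℝ => y * Real.log n + Real.log (Nat.factorial n)
        - ∑ m ∈ Finset.range (n + 1), Real.log (y + m) := by
    funext y; simp only [Real.BohrMollerup.logGammaSeq]
  rw [this, dlg]; exact h3

lemma hasDerivAt_dlg (n : ℕ) {x : ℝ} (hx : 0 < x) :
    HasDerivAt (dlg n) (ddlg n x) x := by
  have h2 : HasDerivAt (fun y : ℝ => ∑ m ∈ Finset.range (n + 1), (y + m)⁻¹)
      (∑ m ∈ Finset.range (n + 1), -((x + (m:ℝ)) ^ 2)⁻¹) x := by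
    refine HasDerivAt.fun_sum fun m _ => ?_
    have hne : x + (m : ℝ) ≠ 0 := by positivity
    have := (((hasDerivAt_id x).add_const (m : ℝ)).fun_inv hne)
    refine this.congr_deriv ?_
    simp [neg_div, one_div]
  have := (hasDerivAt_const x (Real.log n)).fun_sub h2
  exact this.congr_deriv (by simp [ddlg])

lemma dlg_eq (n : ℕ) {x : ℝ} (hx : 0 < x) :
    dlg n x = (Real.log n - ∑ m ∈ Finset.range n, ((m : ℝ) + 1)⁻¹) + -x⁻¹
      + ∑ m ∈ Finset.range n, x * (((m : ℝ) + 1) * (x + m + 1))⁻¹ := by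
  have h1 : ∑ m ∈ Finset.range (n + 1), (x + m)⁻¹
      = (∑ m ∈ Finset.range n, (x + (m + 1 : ℕ))⁻¹) + (x + (0:ℕ))⁻¹ :=
    Finset.sum_range_succ' _ n
  have h2 : ∀ m : ℕ, (x + (m + 1 : ℕ))⁻¹ = ((m : ℝ) + 1)⁻¹ - x * (((m : ℝ) + 1) * (x + m + 1))⁻¹ := by
    intro m
    have hm : ((m : ℝ) + 1) ≠ 0 := by positivity
    have hxm : x + (m : ℝ) + 1 ≠ 0 := by positivity
    push_cast
    have : x + (↑m + 1) = x + ↑m + 1 := by ring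
    rw [this]
    field_simp
    ring
  simp only [dlg, h1, h2, Finset.sum_sub_distrib, Nat.cast_zero, add_zero]
  ring

lemma harmonic_cast (n : ℕ) :
    ((harmonic n : ℚ) : ℝ) = ∑ m ∈ Finset.range n, ((m : ℝ) + 1)⁻¹ := by
  rw [harmonic]
  push_cast
  rfl

lemma tendsto_c :
    Tendsto (fun n : ℕ => Real.log n - ∑ m ∈ Finset.range n, ((m : ℝ) + 1)⁻¹) atTop
      (𝓝 (-Real.eulerMascheroniConstant)) := by
  have := Real.tendsto_harmonic_sub_log.neg
  refine this.congr fun n => ?_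
  rw [← harmonic_cast]
  ring

lemma tendsto_dlg {x : ℝ} (hx : 0 < x) :
    Tendsto (fun n => dlg n x) atTop (𝓝 (psi x)) := by
  have h3 := (summable_aux hx).hasSum.tendsto_sum_nat
  have h2 : Tendsto (fun _ : ℕ => -x⁻¹) atTop (𝓝 (-x⁻¹)) := tendsto_const_nhds
  have h4 := (tendsto_c.add h2).add h3
  have h5 : psi x = -Real.eulerMascheroniConstant + -x⁻¹
      + ∑' m : ℕ, x * (((m : ℝ) + 1) * (x + m + 1))⁻¹ := by rw [psi]; ring
  rw [h5]
  exact Tendsto.congr (fun n => (dlg_eq n hx).symm) h4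

lemma tuo_dlg {a b : ℝ} (ha : 0 < a) :
    TendstoUniformlyOn dlg psi atTop (Icc a b) := by
  have hbase : Summable fun m : ℕ => (max b 0) * (((m : ℝ) + 1) ^ 2)⁻¹ := by
    refine Summable.mul_left _ ?_
    have := Real.summable_one_div_nat_pow.mpr (le_refl 2)
    simpa [one_div] using (summable_nat_add_iff 1).mpr this
  have U3 : TendstoUniformlyOn
      (fun n (x : ℝ) => ∑ m ∈ Finset.range n, x * (((m : ℝ) + 1) * (x + m + 1))⁻¹)
      (fun x => ∑' m : ℕ, x * (((m : ℝ) + 1) * (x + m + 1))⁻¹) atTop (Icc a b) := by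
    refine tendstoUniformlyOn_tsum_nat hbase fun m x hx => ?_
    obtain ⟨hax, hxb⟩ := hx
    have hx0 : 0 < x := ha.trans_le hax
    have h1 : ((m : ℝ) + 1) * ((m : ℝ) + 1) ≤ ((m : ℝ) + 1) * (x + m + 1) := by
      nlinarith [(Nat.cast_nonneg m : (0:ℝ) ≤ m)]
    have h2 : (0:ℝ) < ((m : ℝ) + 1) * ((m : ℝ) + 1) := by positivity
    rw [Real.norm_eq_abs, abs_of_nonneg (by positivity)]
    calc x * (((m : ℝ) + 1) * (x + m + 1))⁻¹ ≤ x * (((m : ℝ) + 1) * ((m : ℝ) + 1))⁻¹ :=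
          mul_le_mul_of_nonneg_left (inv_anti₀ h2 h1) hx0.le
      _ ≤ (max b 0) * (((m : ℝ) + 1) ^ 2)⁻¹ := by
          rw [← sq]
          exact mul_le_mul_of_nonneg_right (hxb.trans (le_max_left _ _)) (by positivity)
  have U1 : TendstoUniformlyOn
      (fun (n : ℕ) (_ : ℝ) => Real.log n - ∑ m ∈ Finset.range n, ((m : ℝ) + 1)⁻¹)
      (fun _ => -Real.eulerMascheroniConstant) atTop (Icc a b) :=
    tendsto_c.tendstoUniformlyOn_const _
  have U2 : TendstoUniformlyOn (fun (_ : ℕ) (x : ℝ) => -x⁻¹) (fun x => -x⁻¹) atTop (Icc a b) := by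
    rw [Metric.tendstoUniformlyOn_iff]
    intro ε hε
    filter_upwards with n x _
    simpa using hε
  have := (U1.add U2).add U3
  refine TendstoUniformlyOn.congr_right (this.congr ?_) ?_
  · filter_upwards with n x hx
    exact (dlg_eq n (ha.trans_le hx.1)).symm
  · intro x _
    simp only [Pi.add_apply, psi]
    ring

lemma tuo_shift {F : ℕ → ℝ → ℝ} {g : ℝ → ℝ} {s : Set ℝ}
    (h : TendstoUniformlyOn F g atTop s) :
    TendstoUniformlyOn (fun n => F (n + 1)) g atTop s := by
  rw [Metric.tendstoUniformlyOn_iff] at h ⊢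
  intro ε hε
  obtain ⟨N, hN⟩ := eventually_atTop.mp (h ε hε)
  exact eventually_atTop.mpr ⟨N, fun n hn => hN (n + 1) (by omega)⟩

lemma tuo_ddlg {a b : ℝ} (ha : 0 < a) :
    TendstoUniformlyOn ddlg T atTop (Icc a b) := by
  set c := min a 1 with hc
  have hc0 : 0 < c := lt_min ha one_pos
  have hbase : Summable fun m : ℕ => (c ^ 2)⁻¹ * (((m : ℝ) + 1) ^ 2)⁻¹ := by
    refine Summable.mul_left _ ?_
    have := Real.summable_one_div_nat_pow.mpr (le_refl 2)
    simpa [one_div] using (summable_nat_add_iff 1).mpr this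
  have U : TendstoUniformlyOn
      (fun n (x : ℝ) => ∑ m ∈ Finset.range n, ((x + (m : ℝ)) ^ 2)⁻¹) T atTop (Icc a b) := by
    refine tendstoUniformlyOn_tsum_nat hbase fun m x hx => ?_
    obtain ⟨hax, _⟩ := hx
    have hx0 : 0 < x := ha.trans_le hax
    have h1 : c * ((m : ℝ) + 1) ≤ x + m := by
      have h2 : c ≤ 1 := min_le_right _ _
      have h3 : c ≤ a := min_le_left _ _
      nlinarith [(Nat.cast_nonneg m : (0:ℝ) ≤ m)]
    have h2 : (0:ℝ) < c * ((m : ℝ) + 1) := by positivity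
    rw [Real.norm_eq_abs, abs_of_nonneg (by positivity)]
    calc ((x + (m:ℝ)) ^ 2)⁻¹ ≤ ((c * ((m:ℝ)+1)) ^ 2)⁻¹ :=
          inv_anti₀ (by positivity) (pow_le_pow_left₀ h2.le h1 2)
      _ = (c ^ 2)⁻¹ * (((m : ℝ) + 1) ^ 2)⁻¹ := by rw [mul_pow, mul_inv]
  exact tuo_shift U

lemma mem_s {z : ℝ} (hz : 0 < z) : z ∈ Ioo (z / 2) (z + 1) :=
  ⟨by linarith, by linarith⟩

lemma pos_of_mem {z x : ℝ} (hz : 0 < z) (hx : x ∈ Ioo (z / 2) (z + 1)) : 0 < x :=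
  lt_trans (by linarith) hx.1

lemma hasDerivAt_logGamma {z : ℝ} (hz : 0 < z) :
    HasDerivAt (fun x => Real.log (Real.Gamma x)) (psi z) z := by
  refine hasDerivAt_of_tendstoUniformlyOn isOpen_Ioo
    ((tuo_dlg (a := z / 2) (b := z + 1) (by linarith)).mono Ioo_subset_Icc_self)
    (Eventually.of_forall fun n x hx => hasDerivAt_logGammaSeq n (pos_of_mem hz hx))
    (fun x hx => ?_) (mem_s hz)
  exact Real.BohrMollerup.tendsto_log_gamma (pos_of_mem hz hx)

lemma hasDerivAt_psi {z : ℝ} (hz : 0 < z) :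
    HasDerivAt psi (T z) z :=
  hasDerivAt_of_tendstoUniformlyOn isOpen_Ioo
    ((tuo_ddlg (a := z / 2) (b := z + 1) (by linarith)).mono Ioo_subset_Icc_self)
    (Eventually.of_forall fun n x hx => hasDerivAt_dlg n (pos_of_mem hz hx))
    (fun x hx => tendsto_dlg (pos_of_mem hz hx)) (mem_s hz)

lemma trigamma_eq {z : ℝ} (hz : 0 < z) : trigamma z = T z := by
  rw [trigamma, iteratedDeriv_succ, iteratedDeriv_one]
  have hev : (deriv fun x => Real.log (Real.Gamma x)) =ᶠ[𝓝 z] psi := by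
    filter_upwards [eventually_gt_nhds hz] with x hx
    exact (hasDerivAt_logGamma hx).deriv
  rw [hev.deriv_eq]
  exact (hasDerivAt_psi hz).deriv

lemma integrableOn_t_exp {c : ℝ} (hc : 0 < c) :
    IntegrableOn (fun t : ℝ => t * Real.exp (-(c * t))) (Ioi 0) := by
  have := integrableOn_rpow_mul_exp_neg_mul_rpow (p := 1) (s := 1) (b := c)
    (by norm_num) one_pos hc
  simpa using this

lemma integral_t_exp {c : ℝ} (hc : 0 < c) :
    ∫ t in Ioi 0, t * Real.exp (-(c * t)) = (c ^ 2)⁻¹ := by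
  have := Real.integral_rpow_mul_exp_neg_mul_Ioi (a := 2) (r := c) (by norm_num) hc
  rw [Real.Gamma_two] at this
  have h2 : (1 / c : ℝ) ^ (2:ℝ) = (c ^ 2)⁻¹ := by
    rw [Real.rpow_two]
    field_simp
  rw [h2, mul_one] at this
  rw [← this]
  refine setIntegral_congr_fun measurableSet_Ioi fun t ht => ?_
  norm_num

lemma lintegral_norm_eq {c : ℝ} (hc : 0 < c) :
    ∫⁻ t in Ioi 0, ‖t * Real.exp (-(c * t))‖₊ = ENNReal.ofReal ((c ^ 2)⁻¹) := by
  rw [← integral_t_exp hc]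
  rw [MeasureTheory.ofReal_integral_eq_lintegral_ofReal (integrableOn_t_exp hc)
    ((ae_restrict_iff' measurableSet_Ioi).mpr (Eventually.of_forall fun t ht =>
      mul_nonneg (le_of_lt ht) (Real.exp_nonneg _)))]
  refine lintegral_congr_ae ?_
  filter_upwards [ae_restrict_mem measurableSet_Ioi] with t ht
  rw [← enorm_eq_nnnorm, ← ofReal_norm, Real.norm_eq_abs, abs_of_nonneg]
  have : (0:ℝ) < t := ht
  positivity

lemma geom_identity {z t : ℝ} (hz : 0 < z) (ht : 0 < t) :
    (∑' n : ℕ, t * Real.exp (-((z + n) * t))) = t * (1 - Real.exp (-t))⁻¹ * Real.exp (-(z * t)) := by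
  have h1 : ∀ n : ℕ, t * Real.exp (-((z + n) * t))
      = (t * Real.exp (-(z * t))) * (Real.exp (-t)) ^ n := by
    intro n
    rw [← Real.exp_nat_mul, mul_assoc, ← Real.exp_add]
    congr 2
    push_cast
    ring
  simp_rw [h1]
  rw [tsum_mul_left, tsum_geometric_of_lt_one (Real.exp_nonneg _)
    (Real.exp_lt_one_iff.mpr (by linarith))]
  ring

lemma interchange {z : ℝ} (hz : 0 < z) :
    ∫ t in Ioi 0, t * (1 - Real.exp (-t))⁻¹ * Real.exp (-(z * t)) = T z := by
  have hmeas : ∀ n : ℕ, AEStronglyMeasurable (fun t : ℝ => t * Real.exp (-((z + n) * t)))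
      (volume.restrict (Ioi 0)) :=
    fun n => Continuous.aestronglyMeasurable (by fun_prop)
  have hlint : ∑' n : ℕ, ∫⁻ t in Ioi 0, ‖t * Real.exp (-((z + n) * t))‖₊ ≠ ⊤ := by
    have hpos : ∀ n : ℕ, (0:ℝ) < z + n := fun n => by positivity
    simp_rw [fun n => lintegral_norm_eq (hpos n)]
    rw [← ENNReal.ofReal_tsum_of_nonneg (fun n => by positivity) (summable_inv_sq_add hz)]
    exact ENNReal.ofReal_ne_top
  have h2 := MeasureTheory.integral_tsum hmeas hlint
  calc ∫ t in Ioi 0, t * (1 - Real.exp (-t))⁻¹ * Real.exp (-(z * t))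
      = ∫ t in Ioi 0, ∑' n : ℕ, t * Real.exp (-((z + n) * t)) :=
        setIntegral_congr_fun measurableSet_Ioi fun t ht => (geom_identity hz ht).symm
    _ = ∑' n : ℕ, ∫ t in Ioi 0, t * Real.exp (-((z + n) * t)) := h2
    _ = T z := tsum_congr fun n => integral_t_exp (by positivity)

noncomputable def G (t : ℝ) : ℝ :=
  (Real.exp t - 1 - t) / ((Real.exp t - 1) * (1 - Real.exp (-t)))

noncomputable def fker (t : ℝ) : ℝ := t * (1 - Real.exp (-t))⁻¹

lemma exp_neg_lt_one {t : ℝ} (ht : 0 < t) : Real.exp (-t) < 1 :=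
  Real.exp_lt_one_iff.mpr (by linarith)

lemma hasDerivAt_fker {t : ℝ} (ht : 0 < t) : HasDerivAt fker (G t) t := by
  have h2 : (0:ℝ) < 1 - Real.exp (-t) := by linarith [exp_neg_lt_one ht]
  have hexp : HasDerivAt (fun s : ℝ => 1 - Real.exp (-s)) (Real.exp (-t)) t := by
    have := ((hasDerivAt_neg t).exp)
    simpa using (hasDerivAt_const t (1:ℝ)).fun_sub this
  have hinv := hexp.fun_inv h2.ne'
  have := (hasDerivAt_id t).fun_mul hinv
  refine this.congr_deriv ?_
  have hE : Real.exp (-t) = (Real.exp t)⁻¹ := Real.exp_neg t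
  have hEpos := Real.exp_pos t
  have hE1 : (1:ℝ) < Real.exp t := Real.one_lt_exp_iff.mpr ht
  rw [G, hE]
  have h3 : Real.exp t - 1 ≠ 0 := sub_ne_zero.mpr (ne_of_gt hE1)
  have h5 : 1 - (Real.exp t)⁻¹ ≠ 0 := by rw [← hE]; exact h2.ne'
  have h6 : Real.exp t ≠ 0 := hEpos.ne'
  rw [id_def, one_mul]
  rw [show (1 - (Real.exp t)⁻¹) = (Real.exp t - 1) / Real.exp t by field_simp]
  field_simp
  ring

lemma G_pos {t : ℝ} (ht : 0 < t) : 0 < G t := by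
  have h1 : 0 < Real.exp t - 1 - t := by
    have := Real.add_one_lt_exp (ne_of_gt ht)
    linarith
  have h2 : 0 < Real.exp t - 1 := by linarith [Real.one_lt_exp_iff.mpr ht]
  have h3 : 0 < 1 - Real.exp (-t) := by linarith [exp_neg_lt_one ht]
  exact div_pos h1 (mul_pos h2 h3)

lemma G_le_one {t : ℝ} (ht : 0 < t) : G t ≤ 1 := by
  have h2 : 0 < Real.exp t - 1 := by linarith [Real.one_lt_exp_iff.mpr ht]
  have h3 : 0 < 1 - Real.exp (-t) := by linarith [exp_neg_lt_one ht]
  rw [G, div_le_one (mul_pos h2 h3)]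
  have h4 : Real.exp t * Real.exp (-t) = 1 := by rw [← Real.exp_add]; simp
  nlinarith [Real.exp_pos (-t), Real.add_one_le_exp (-t)]

lemma fker_nonneg {t : ℝ} (ht : 0 < t) : 0 ≤ fker t := by
  have h3 : 0 < 1 - Real.exp (-t) := by linarith [exp_neg_lt_one ht]
  rw [fker]; positivity

noncomputable def Fib (z : ℝ) (t : ℝ) : ℝ :=
  if t = 0 then -1 else -(fker t * Real.exp (-(z * t)))

lemma hasDerivAt_Fib {z t : ℝ} (ht : 0 < t) :
    HasDerivAt (Fib z) (z * (fker t * Real.exp (-(z * t))) - G t * Real.exp (-(z * t))) t := by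
  have he : HasDerivAt (fun s : ℝ => Real.exp (-(z * s))) (-z * Real.exp (-(z * t))) t := by
    have h1 : HasDerivAt (fun s : ℝ => -(z * s)) (-z) t := by
      simpa using ((hasDerivAt_id t).const_mul z).fun_neg
    simpa [mul_comm] using h1.exp
  have hd := ((hasDerivAt_fker ht).fun_mul he).fun_neg
  have hcongr : Fib z =ᶠ[𝓝 t] fun s => -(fker s * Real.exp (-(z * s))) := by
    filter_upwards [eventually_ne_nhds (ne_of_gt ht)] with s hs
    rw [Fib, if_neg hs]
  refine (HasDerivAt.congr_of_eventuallyEq ?_ hcongr)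
  convert hd using 1
  ring

lemma cwa_Fib {z : ℝ} : ContinuousWithinAt (Fib z) (Ici 0) 0 := by
  rw [← continuousWithinAt_Ioi_iff_Ici, ContinuousWithinAt]
  have hF0 : Fib z 0 = -1 := by rw [Fib, if_pos rfl]
  rw [hF0]
  have hslope : Tendsto (fun t : ℝ => (1 - Real.exp (-t)) / t) (𝓝[≠] 0) (𝓝 1) := by
    have hd : HasDerivAt (fun s : ℝ => 1 - Real.exp (-s)) 1 0 := by
      have := ((hasDerivAt_neg (0:ℝ)).exp)
      simpa using ((hasDerivAt_const (0:ℝ) (1:ℝ)).fun_sub this)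
    have := hasDerivAt_iff_tendsto_slope.mp hd
    refine this.congr fun y => ?_
    rw [slope_def_field]
    simp [div_eq_mul_inv]
  have hslope' : Tendsto (fun t : ℝ => (1 - Real.exp (-t)) / t) (𝓝[>] 0) (𝓝 1) :=
    hslope.mono_left (nhdsWithin_mono _ fun x hx => ne_of_gt hx)
  have hfker : Tendsto fker (𝓝[>] 0) (𝓝 1) := by
    have := (hslope'.inv₀ one_ne_zero)
    rw [inv_one] at this
    refine this.congr' ?_
    filter_upwards [self_mem_nhdsWithin] with t (ht : 0 < t)
    rw [fker]
    field_simp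
  have hexp : Tendsto (fun t : ℝ => Real.exp (-(z * t))) (𝓝[>] 0) (𝓝 1) := by
    have : Continuous fun t : ℝ => Real.exp (-(z * t)) := by fun_prop
    have h0 : Real.exp (-(z * 0)) = 1 := by simp
    simpa [h0] using (this.tendsto 0).mono_left nhdsWithin_le_nhds
  have := (hfker.mul hexp).neg
  rw [mul_one] at this
  refine this.congr' ?_
  filter_upwards [self_mem_nhdsWithin] with t (ht : 0 < t)
  rw [Fib, if_neg (ne_of_gt ht)]

lemma f_le' {t : ℝ} (ht : 0 < t) : fker t ≤ 1 + t := by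
  have h1 : Real.exp (-t) < 1 := exp_neg_lt_one ht
  have h2 : 0 < 1 - Real.exp (-t) := by linarith
  rw [fker, inv_eq_one_div, mul_one_div, div_le_iff₀ h2]
  have h3 : Real.exp t * Real.exp (-t) = 1 := by rw [← Real.exp_add]; simp
  nlinarith [Real.add_one_le_exp t, Real.exp_pos (-t), Real.exp_pos t]

lemma contOn_fker : ContinuousOn fker (Ioi 0) := by
  refine ContinuousOn.mul continuousOn_id ?_
  refine ContinuousOn.inv₀ (by fun_prop) fun t ht => ?_
  have : (0:ℝ) < t := ht
  linarith [exp_neg_lt_one this]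

lemma contOn_G : ContinuousOn G (Ioi 0) := by
  refine ContinuousOn.div (by fun_prop) (by fun_prop) fun t ht => ?_
  have h : (0:ℝ) < t := ht
  have h2 : 0 < Real.exp t - 1 := by linarith [Real.one_lt_exp_iff.mpr h]
  have h3 : 0 < 1 - Real.exp (-t) := by linarith [exp_neg_lt_one h]
  positivity

lemma integrable_fker_exp {z : ℝ} (hz : 0 < z) :
    IntegrableOn (fun t => fker t * Real.exp (-(z * t))) (Ioi 0) := by
  refine Integrable.mono'
    ((exp_neg_integrableOn_Ioi 0 hz).add (integrableOn_t_exp hz))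
    ((contOn_fker.mul (by fun_prop)).aestronglyMeasurable measurableSet_Ioi) ?_
  filter_upwards [ae_restrict_mem measurableSet_Ioi] with t (ht : 0 < t)
  rw [Real.norm_eq_abs, abs_of_nonneg (mul_nonneg (fker_nonneg ht) (Real.exp_nonneg _))]
  simp only [Pi.add_apply, neg_mul]
  have := f_le' ht
  have he := Real.exp_nonneg (-(z * t))
  nlinarith [mul_nonneg (sub_nonneg.mpr this) he]

lemma integrable_G_exp {z : ℝ} (hz : 0 < z) :
    IntegrableOn (fun t => G t * Real.exp (-(z * t))) (Ioi 0) := by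
  refine Integrable.mono' (exp_neg_integrableOn_Ioi 0 hz)
    ((contOn_G.mul (by fun_prop)).aestronglyMeasurable measurableSet_Ioi) ?_
  filter_upwards [ae_restrict_mem measurableSet_Ioi] with t (ht : 0 < t)
  rw [Real.norm_eq_abs, abs_of_nonneg (mul_nonneg (G_pos ht).le (Real.exp_nonneg _))]
  rw [neg_mul]
  have := G_le_one ht
  have he := Real.exp_nonneg (-(z * t))
  nlinarith [mul_nonneg (sub_nonneg.mpr this) he]

lemma tendsto_Fib_top {z : ℝ} (hz : 0 < z) : Tendsto (Fib z) atTop (𝓝 0) := by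
  have hg : Tendsto (fun t : ℝ => Real.exp (-(z * t)) + t * Real.exp (-(z * t))) atTop (𝓝 0) := by
    have hzt : Tendsto (fun t : ℝ => z * t) atTop atTop :=
      Tendsto.const_mul_atTop hz tendsto_id
    have h1 : Tendsto (fun t : ℝ => Real.exp (-(z * t))) atTop (𝓝 0) :=
      tendsto_exp_neg_atTop_nhds_zero.comp hzt
    have h2' : Tendsto (fun t : ℝ => (z * t) * Real.exp (-(z * t))) atTop (𝓝 0) := by
      have := (tendsto_pow_mul_exp_neg_atTop_nhds_zero 1).comp hzt
      simpa [Function.comp_def] using this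
    have h2 : Tendsto (fun t : ℝ => t * Real.exp (-(z * t))) atTop (𝓝 0) := by
      have := h2'.const_mul (1 / z)
      rw [mul_zero] at this
      refine this.congr fun t => ?_
      field_simp
    simpa using h1.add h2
  refine squeeze_zero_norm' ?_ hg
  filter_upwards [eventually_gt_atTop 0] with t (ht : 0 < t)
  rw [Fib, if_neg (ne_of_gt ht), norm_neg, Real.norm_eq_abs,
    abs_of_nonneg (mul_nonneg (fker_nonneg ht) (Real.exp_nonneg _))]
  have := f_le' ht
  have he := Real.exp_nonneg (-(z * t))
  nlinarith [mul_nonneg (sub_nonneg.mpr this) he]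

lemma ibp {z : ℝ} (hz : 0 < z) :
    ∫ t in Ioi 0, G t * Real.exp (-(z * t)) = z * T z - 1 := by
  have hint : IntegrableOn
      (fun t => z * (fker t * Real.exp (-(z * t))) - G t * Real.exp (-(z * t))) (Ioi 0) :=
    ((integrable_fker_exp hz).const_mul z).sub (integrable_G_exp hz)
  have h0 := integral_Ioi_of_hasDerivAt_of_tendsto cwa_Fib
    (fun t ht => hasDerivAt_Fib ht) hint (tendsto_Fib_top hz)
  have hF0 : Fib z 0 = -1 := by rw [Fib, if_pos rfl]
  rw [hF0, zero_sub, neg_neg] at h0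
  have hs := integral_sub ((integrable_fker_exp hz).const_mul z) (integrable_G_exp hz)
  rw [hs] at h0
  rw [MeasureTheory.integral_const_mul] at h0
  have h1 : ∫ t in Ioi 0, fker t * Real.exp (-(z * t)) = T z := by
    rw [← interchange hz]
    rfl
  rw [h1] at h0
  linarith

lemma integral_pos {z : ℝ} (hz : 0 < z) :
    0 < ∫ t in Ioi 0, G t * Real.exp (-(z * t)) := by
  have hn : 0 ≤ᵐ[volume.restrict (Ioi 0)] fun t => G t * Real.exp (-(z * t)) := by
    filter_upwards [ae_restrict_mem measurableSet_Ioi] with t (ht : 0 < t)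
    exact (mul_pos (G_pos ht) (Real.exp_pos _)).le
  rw [setIntegral_pos_iff_support_of_nonneg_ae hn (integrable_G_exp hz)]
  have hsup : Ioi (0:ℝ) ⊆ Function.support fun t => G t * Real.exp (-(z * t)) := fun t ht =>
    ne_of_gt (mul_pos (G_pos ht) (Real.exp_pos _))
  have hle : (⊤:ENNReal) ≤ volume (Function.support (fun t => G t * Real.exp (-(z * t))) ∩ Ioi 0) :=
    le_trans (le_of_eq Real.volume_Ioi.symm) (measure_mono fun t ht => ⟨hsup ht, ht⟩)
  exact lt_of_lt_of_le (by simp) hle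

end TriAux

open TriAux Set in
/-- For all real `z > 0`, `z * ψ'(z) > 1`; equivalently
`z ψ'(z) - 1 = ∫_0^∞ (e^t - 1 - t)/((e^t - 1)(1 - e^{-t})) e^{-t z} dt > 0`. -/
theorem trigamma_mul_self_gt_one (z : ℝ) (hz : 0 < z) :
    z * trigamma z - 1 =
      (∫ t in Set.Ioi (0 : ℝ),
        (Real.exp t - 1 - t) / ((Real.exp t - 1) * (1 - Real.exp (-t))) * Real.exp (-t * z)) ∧
    1 < z * trigamma z := by
  have hpos := integral_pos hz
  have hibp := ibp hz
  have hT : trigamma z = T z := trigamma_eq hz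
  constructor
  · calc z * trigamma z - 1 = z * T z - 1 := by rw [hT]
      _ = ∫ t in Ioi 0, G t * Real.exp (-(z * t)) := hibp.symm
      _ = ∫ t in Set.Ioi (0 : ℝ),
          (Real.exp t - 1 - t) / ((Real.exp t - 1) * (1 - Real.exp (-t))) * Real.exp (-t * z) := by
        refine setIntegral_congr_fun measurableSet_Ioi fun t _ => ?_
        rw [G, show -(z * t) = -t * z by ring]
  · rw [hT]
    linarith
end

section
/- The function z ↦ z² ψ'(z) is subadditive on (0, ∞): for all x, y > 0, (x+y)² ψ'(x+y) ≤ x² ψ'(x) + y² ψ'(y). -/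
open Real Filter Finset Set Topology

namespace TrigammaAux

noncomputable def F (x : ℝ) : ℝ := ∑' n : ℕ, 1 / (x + n) ^ 2
noncomputable def T (x : ℝ) : ℝ := ∑' n : ℕ, 1 / (x + n) ^ 3

noncomputable def gUf (y : ℝ) : ℝ := 1/y + 1/(2*y^2) + 1/(6*y^3)
noncomputable def hLf (y : ℝ) : ℝ := 1/(2*y^2) + 1/(2*y^3)

lemma summable_pow {x : ℝ} (hx : 0 < x) {k : ℕ} (hk : 1 < k) :
    Summable (fun n : ℕ => 1 / (x + n) ^ k) := by
  rw [← summable_nat_add_iff 1]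
  have hbase : Summable (fun n : ℕ => 1 / ((n : ℝ) + 1) ^ k) := by
    have := (summable_one_div_nat_pow (p := k)).2 hk
    have h2 := (summable_nat_add_iff (f := fun n : ℕ => 1 / (n : ℝ) ^ k) 1).2 this
    simpa using h2
  refine hbase.of_nonneg_of_le (fun n => by positivity) (fun n => ?_)
  refine one_div_le_one_div_of_le (by positivity) ?_
  exact pow_le_pow_left₀ (by positivity) (by push_cast; linarith) k

lemma gU_step {m : ℝ} (hm : 0 < m) : 1 / m ^ 2 ≤ gUf m - gUf (m+1) := by
  rw [gUf, gUf]
  have hm1 : (0:ℝ) < m + 1 := by linarith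
  have key : (1/m + 1/(2*m^2) + 1/(6*m^3)) - (1/(m+1) + 1/(2*(m+1)^2) + 1/(6*(m+1)^3))
      - 1 / m ^ 2 = 1 / (6 * m^3 * (m+1)^3) := by
    field_simp
    ring
  nlinarith [key, one_div_pos.2 (by positivity : (0:ℝ) < 6 * m^3 * (m+1)^3)]

lemma hL_step {m : ℝ} (hm : 0 < m) : hLf m - hLf (m+1) ≤ 1 / m ^ 3 := by
  rw [hLf, hLf]
  have hm1 : (0:ℝ) < m + 1 := by linarith
  have key : 1 / m ^ 3 - ((1/(2*m^2) + 1/(2*m^3)) - (1/(2*(m+1)^2) + 1/(2*(m+1)^3)))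
      = (m + 1/2) / (m^3 * (m+1)^3) := by
    field_simp
    ring
  nlinarith [key, div_pos (by linarith : (0:ℝ) < m + 1/2) (by positivity : (0:ℝ) < m^3 * (m+1)^3)]

lemma F_le {x : ℝ} (hx : 0 < x) : F x ≤ gUf x := by
  set g : ℝ → ℝ := gUf with hg
  refine Summable.tsum_le_of_sum_range_le (summable_pow hx (by norm_num)) (fun n => ?_)
  have h1 : ∑ i ∈ Finset.range n, 1 / (x + i) ^ 2
      ≤ ∑ i ∈ Finset.range n, (g (x + i) - g (x + (i+1))) := by
    refine Finset.sum_le_sum (fun i _ => ?_)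
    have := gU_step (m := x + i) (by positivity)
    simpa [hg, gUf, push_cast, add_assoc] using this
  have h2 : ∑ i ∈ Finset.range n, (g (x + i) - g (x + (i+1))) = g x - g (x + n) := by
    have := Finset.sum_range_sub' (fun i : ℕ => g (x + i)) n
    simpa using this
  have h3 : 0 ≤ g (x + n) := by
    have hp : (0:ℝ) < x + n := by positivity
    rw [hg, gUf]; positivity
  calc ∑ i ∈ Finset.range n, 1 / (x + i) ^ 2 ≤ g x - g (x + n) := h1.trans h2.le
    _ ≤ g x := by linarith
lemma hL_tendsto {x : ℝ} :
    Tendsto (fun n : ℕ => hLf (x+n)) atTop (𝓝 0) := by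
  simp only [hLf]
  have hxt : Tendsto (fun n : ℕ => x + (n:ℝ)) atTop atTop :=
    tendsto_atTop_add_const_left _ x tendsto_natCast_atTop_atTop
  have h2 : Tendsto (fun y : ℝ => 1/(2*y^2) + 1/(2*y^3)) atTop (𝓝 0) := by
    have a2 : Tendsto (fun y : ℝ => 1/(2*y^2)) atTop (𝓝 0) := by
      simpa only [one_div, Pi.inv_def] using ((tendsto_pow_atTop (two_ne_zero)).const_mul_atTop
        (by norm_num : (0:ℝ) < 2)).inv_tendsto_atTop
    have a3 : Tendsto (fun y : ℝ => 1/(2*y^3)) atTop (𝓝 0) := by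
      simpa only [one_div, Pi.inv_def] using ((tendsto_pow_atTop (three_ne_zero)).const_mul_atTop
        (by norm_num : (0:ℝ) < 2)).inv_tendsto_atTop
    simpa using a2.add a3
  exact h2.comp hxt

lemma T_ge {x : ℝ} (hx : 0 < x) : hLf x ≤ T x := by
  set h : ℝ → ℝ := hLf with hh
  have hsum := summable_pow hx (by norm_num : 1 < 3)
  have hpar : ∀ n : ℕ, h x ≤ T x + h (x + n) := by
    intro n
    have h1 : ∑ i ∈ Finset.range n, (h (x + i) - h (x + (i+1)))
        ≤ ∑ i ∈ Finset.range n, 1 / (x + i) ^ 3 := by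
      refine Finset.sum_le_sum (fun i _ => ?_)
      have := hL_step (m := x + i) (by positivity)
      simpa [hh, hLf, push_cast, add_assoc] using this
    have h2 : ∑ i ∈ Finset.range n, (h (x + i) - h (x + (i+1))) = h x - h (x + n) := by
      have := Finset.sum_range_sub' (fun i : ℕ => h (x + i)) n
      simpa using this
    have h3 : ∑ i ∈ Finset.range n, 1 / (x + i) ^ 3 ≤ T x :=
      Summable.sum_le_tsum _ (fun i _ => by positivity) hsum
    rw [h2] at h1
    linarith
  have hlim : Tendsto (fun n : ℕ => T x + h (x + n)) atTop (𝓝 (T x)) := by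
    simpa using (tendsto_const_nhds (x := T x)).add (hL_tendsto (x := x))
  exact ge_of_tendsto' hlim hpar

lemma F_rec {x : ℝ} (hx : 0 < x) : F x = 1/x^2 + F (x+1) := by
  rw [F, Summable.tsum_eq_zero_add (summable_pow hx (by norm_num : 1 < 2))]
  congr 1
  · norm_num
  · rw [F]
    refine tsum_congr (fun n => ?_)
    push_cast
    ring_nf

lemma T_first {x : ℝ} (hx : 0 < x) : 1/x^3 ≤ T x := by
  have := Summable.le_tsum (summable_pow hx (by norm_num : 1 < 3)) 0 (fun i _ => by positivity)
  rw [T]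
  simpa using this

lemma F_nonneg {x : ℝ} (hx : 0 < x) : 0 ≤ F x :=
  tsum_nonneg (fun n => by positivity)

lemma key_ineq {x : ℝ} (hx : 0 < x) : F x ≤ 2 * x * T x := by
  rcases le_or_gt (1/3) x with h13 | h13
  · have h1 := F_le hx
    have h2 := T_ge hx
    rw [gUf] at h1
    rw [hLf] at h2
    have h3 : 1/x + 1/(2*x^2) + 1/(6*x^3) ≤ 2 * x * (1/(2*x^2) + 1/(2*x^3)) := by
      have e : 2 * x * (1/(2*x^2) + 1/(2*x^3)) - (1/x + 1/(2*x^2) + 1/(6*x^3))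
          = (3*x - 1) / (6*x^3) := by field_simp; ring
      nlinarith [div_nonneg (by linarith : (0:ℝ) ≤ 3*x - 1) (by positivity : (0:ℝ) ≤ 6*x^3)]
    have h4 : 2 * x * (1/(2*x^2) + 1/(2*x^3)) ≤ 2 * x * T x := by
      have := mul_le_mul_of_nonneg_left h2 (by linarith : (0:ℝ) ≤ 2 * x)
      linarith
    linarith
  · have hx1 : (0:ℝ) < x + 1 := by linarith
    have h1 : F (x+1) ≤ 1/(x+1) + 1/(2*(x+1)^2) + 1/(6*(x+1)^3) := by
      have := F_le hx1; rwa [gUf] at this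
    have h2 : 1/(x+1) + 1/(2*(x+1)^2) + 1/(6*(x+1)^3) ≤ 5/3 := by
      have e1 : 1/(x+1) ≤ 1 := by rw [div_le_one hx1]; linarith
      have e2 : 1/(2*(x+1)^2) ≤ 1/2 := by
        rw [div_le_div_iff₀ (by positivity) (by norm_num)]; nlinarith
      have e3 : 1/(6*(x+1)^3) ≤ 1/6 := by
        rw [div_le_div_iff₀ (by positivity) (by norm_num)]; nlinarith
      linarith
    have h3 : (9:ℝ) ≤ 1/x^2 := by
      rw [le_div_iff₀ (by positivity)]; nlinarith
    have h4 : 2/x^2 ≤ 2 * x * T x := by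
      have := mul_le_mul_of_nonneg_left (T_first hx) (by linarith : (0:ℝ) ≤ 2 * x)
      have e : 2 * x * (1/x^3) = 2/x^2 := by field_simp
      linarith [e ▸ this]
    have hrec := F_rec hx
    have e2 : 2/x^2 = 1/x^2 + 1/x^2 := by ring
    linarith

noncomputable def dser (x : ℝ) : ℝ := ∑' n : ℕ, (1/(x + n) - 1/(1 + n))
noncomputable def psi (x : ℝ) : ℝ := - Real.eulerMascheroniConstant - dser x

lemma term_bound {a b y : ℝ} (ha : 0 < a) (hy1 : a ≤ y) (hy2 : y ≤ b) (n : ℕ) :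
    |1/(y + n) - 1/(1 + n)| ≤ ((1+b) * (1+a)/a) * (1/(1+(n:ℝ))^2) := by
  have hn0 : (0:ℝ) ≤ n := Nat.cast_nonneg n
  have hyn : (0:ℝ) < y + n := by linarith
  have h1n : (0:ℝ) < 1 + (n:ℝ) := by linarith
  have ha1 : (0:ℝ) < 1 + a := by linarith
  have heq : 1/(y + n) - 1/(1 + n) = (1 - y)/((y+n)*(1+n)) := by
    field_simp
    try ring
  rw [heq, abs_div, abs_of_pos (mul_pos hyn h1n)]
  have hnum : |1 - y| ≤ 1 + b := by
    rw [abs_le]; constructor <;> nlinarith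
  have hden : a/(1+a) * (1+(n:ℝ))^2 ≤ (y+n)*(1+n) := by
    rw [div_mul_eq_mul_div, div_le_iff₀ ha1]
    nlinarith [mul_nonneg (mul_nonneg hn0 hn0) ha.le, mul_nonneg hn0 ha.le,
      mul_nonneg hn0 (mul_nonneg hn0 ha.le)]
  have hd0 : (0:ℝ) < a/(1+a) * (1+(n:ℝ))^2 := by positivity
  calc |1 - y| / ((y+n)*(1+n)) ≤ (1+b) / (a/(1+a) * (1+(n:ℝ))^2) :=
        div_le_div₀ (by linarith) hnum hd0 hden
    _ = ((1+b) * (1+a)/a) * (1/(1+(n:ℝ))^2) := by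
        field_simp
        try ring

lemma summable_base : Summable (fun n : ℕ => 1/(1+(n:ℝ))^2) := by
  have := summable_pow (x := 1) one_pos (k := 2) (by norm_num)
  simpa using this

lemma summable_dser {x : ℝ} (hx : 0 < x) :
    Summable (fun n : ℕ => 1/(x + n) - 1/(1 + n)) := by
  refine Summable.of_abs ?_
  refine (summable_base.mul_left ((1+x) * (1+x)/x)).of_nonneg_of_le
    (fun n => abs_nonneg _) (fun n => ?_)
  exact term_bound hx le_rfl le_rfl n

lemma harmonic_cast (n : ℕ) :
    ((harmonic n : ℚ) : ℝ) = ∑ m ∈ Finset.range n, 1/(1+(m:ℝ)) := by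
  rw [harmonic]; push_cast
  refine Finset.sum_congr rfl fun i _ => by rw [one_div, add_comm]

lemma tendsto_a : Tendsto (fun n : ℕ => Real.log n - ∑ m ∈ Finset.range (n+1), 1/(1+(m:ℝ)))
    atTop (𝓝 (- Real.eulerMascheroniConstant)) := by
  have h1 : Tendsto (fun n : ℕ => ((harmonic (n+1) : ℚ) : ℝ) - Real.log ((n:ℝ)+1))
      atTop (𝓝 Real.eulerMascheroniConstant) := by
    have h0 := Real.tendsto_harmonic_sub_log.comp (tendsto_add_atTop_nat 1)
    refine h0.congr fun n => ?_
    simp only [Function.comp_apply]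
    push_cast
    ring
  have h2 := Real.tendsto_log_nat_add_one_sub_log
  have heq : (fun n : ℕ => Real.log n - ∑ m ∈ Finset.range (n+1), 1/(1+(m:ℝ)))
      = fun n : ℕ => -(((harmonic (n+1) : ℚ) : ℝ) - Real.log ((n:ℝ)+1))
          - (Real.log ((n:ℝ)+1) - Real.log n) := by
    funext n
    rw [harmonic_cast (n+1)]
    push_cast
    ring
  rw [heq]
  simpa using h1.neg.sub h2

lemma tendstoUniformly_d1 {x : ℝ} (hx : 0 < x) :
    TendstoUniformlyOn (fun (n : ℕ) (y : ℝ) => Real.log n - ∑ m ∈ Finset.range (n+1), 1/(y+m))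
      psi atTop (Set.Ioo (x/2) (x+1)) := by
  have hx2 : 0 < x/2 := by linarith
  have hu : Summable (fun n : ℕ => ((1+(x+1)) * (1+x/2)/(x/2)) * (1/(1+(n:ℝ))^2)) :=
    summable_base.mul_left _
  have hB0 := tendstoUniformlyOn_tsum_nat hu
    (f := fun (n : ℕ) (y : ℝ) => 1/(y+n) - 1/(1+n)) (s := Set.Ioo (x/2) (x+1))
    (fun n y hy => by
      rw [Real.norm_eq_abs]
      exact term_bound hx2 hy.1.le (by linarith [hy.2.le]) n)
  have hB : TendstoUniformlyOn (fun (n : ℕ) (y : ℝ) =>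
      ∑ m ∈ Finset.range (n+1), (1/(y+m) - 1/(1+m))) (fun y => dser y) atTop
      (Set.Ioo (x/2) (x+1)) := by
    intro u hu'
    exact (tendsto_add_atTop_nat 1).eventually (hB0 u hu')
  have ha : TendstoUniformlyOn
      (fun (n : ℕ) (_ : ℝ) => Real.log n - ∑ m ∈ Finset.range (n+1), 1/(1+(m:ℝ)))
      (fun _ => - Real.eulerMascheroniConstant) atTop (Set.Ioo (x/2) (x+1)) :=
    tendsto_a.tendstoUniformlyOn_const _
  have hcomb := ha.sub hB
  have hlim : ((fun (_ : ℝ) => - Real.eulerMascheroniConstant) - fun y => dser y) = psi := by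
    funext z
    simp [psi, Pi.sub_apply]
  rw [hlim] at hcomb
  refine hcomb.congr ?_
  filter_upwards with n
  intro y _
  simp only [Pi.sub_apply, Finset.sum_sub_distrib]
  ring

lemma hasDerivAt_logGammaSeq (n : ℕ) {y : ℝ} (hy : 0 < y) :
    HasDerivAt (fun z => Real.BohrMollerup.logGammaSeq z n)
      (Real.log n - ∑ m ∈ Finset.range (n+1), 1/(y+m)) y := by
  simp only [Real.BohrMollerup.logGammaSeq]
  have h1 : HasDerivAt (fun z : ℝ => z * Real.log n + Real.log (Nat.factorial n : ℝ)) (Real.log n) y := by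
    simpa using ((hasDerivAt_id y).mul_const (Real.log n)).add_const (Real.log (Nat.factorial n : ℝ))
  have h2 : HasDerivAt (fun z : ℝ => ∑ m ∈ Finset.range (n+1), Real.log (z + m))
      (∑ m ∈ Finset.range (n+1), 1/(y+m)) y := by
    refine HasDerivAt.fun_sum (fun m _ => ?_)
    have hne : y + (m:ℝ) ≠ 0 := by positivity
    have := ((hasDerivAt_id y).add_const (m:ℝ)).log hne
    simpa [one_div] using this
  exact h1.sub h2

lemma hasDerivAt_logGamma {x : ℝ} (hx : 0 < x) :
    HasDerivAt (fun y => Real.log (Real.Gamma y)) (psi x) x := by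
  have hmem : x ∈ Set.Ioo (x/2) (x+1) := ⟨by linarith, by linarith⟩
  refine hasDerivAt_of_tendstoUniformlyOn
    (f := fun (n : ℕ) (z : ℝ) => Real.BohrMollerup.logGammaSeq z n)
    isOpen_Ioo (tendstoUniformly_d1 hx) ?_ ?_ hmem
  · filter_upwards with n
    intro y hy
    exact hasDerivAt_logGammaSeq n (by linarith [hy.1] : 0 < y)
  · intro y hy
    exact Real.BohrMollerup.tendsto_log_gamma (by linarith [hy.1] : 0 < y)

lemma hasDerivAt_dser {x : ℝ} (hx : 0 < x) : HasDerivAt dser (-F x) x := by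
  have hx2 : 0 < x/2 := by linarith
  have hmem : x ∈ Set.Ioo (x/2) (x+1) := ⟨by linarith, by linarith⟩
  have hg : ∀ (n : ℕ), ∀ y ∈ Set.Ioo (x/2) (x+1),
      HasDerivAt (fun z : ℝ => 1/(z+(n:ℝ)) - 1/(1+(n:ℝ))) (-(1/(y+(n:ℝ))^2)) y := by
    intro n y hy
    have hn0 : (0:ℝ) ≤ (n:ℝ) := Nat.cast_nonneg n
    have hyn : (0:ℝ) < y + n := by nlinarith [hy.1]
    have h0 : HasDerivAt (fun z : ℝ => z + (n:ℝ)) 1 y := by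
      simpa using (hasDerivAt_id y).add_const (n:ℝ)
    have h1 := (h0.fun_inv (ne_of_gt hyn)).sub_const (1/(1+(n:ℝ)))
    simpa only [one_div, one_pow, neg_div] using h1
  have hg' : ∀ (n : ℕ), ∀ y ∈ Set.Ioo (x/2) (x+1),
      ‖-(1/(y+(n:ℝ))^2)‖ ≤ 1/(x/2 + (n:ℝ))^2 := by
    intro n y hy
    have hn0 : (0:ℝ) ≤ (n:ℝ) := Nat.cast_nonneg n
    have h2 : (0:ℝ) < x/2 + n := by positivity
    have hyn : x/2 + (n:ℝ) < y + n := by linarith [hy.1]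
    have hyn0 : (0:ℝ) < y + n := by linarith
    rw [Real.norm_eq_abs, abs_neg, abs_of_pos (by positivity : (0:ℝ) < 1/(y+(n:ℝ))^2)]
    gcongr
  have h := hasDerivAt_tsum_of_isPreconnected
    (u := fun n : ℕ => 1/(x/2 + (n:ℝ))^2)
    (g := fun (n : ℕ) (y : ℝ) => 1/(y+(n:ℝ)) - 1/(1+(n:ℝ)))
    (g' := fun (n : ℕ) (y : ℝ) => -(1/(y+(n:ℝ))^2))
    (summable_pow hx2 (by norm_num)) isOpen_Ioo ((convex_Ioo _ _).isPreconnected)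
    hg hg' hmem (summable_dser hx) hmem
  have e2 : ∑' (n : ℕ), -(1/(x+(n:ℝ))^2) = -F x := by
    rw [tsum_neg, F]
  rw [e2] at h
  exact h

lemma hasDerivAt_psi {x : ℝ} (hx : 0 < x) : HasDerivAt psi (F x) x := by
  have h := (hasDerivAt_const x (- Real.eulerMascheroniConstant)).fun_sub (hasDerivAt_dser hx)
  simpa using (show HasDerivAt psi (0 - -F x) x from h)

lemma iteratedDeriv_eq {x : ℝ} (hx : 0 < x) :
    iteratedDeriv 2 (fun y => Real.log (Real.Gamma y)) x = F x := by
  rw [show (2:ℕ) = 1+1 from rfl, iteratedDeriv_succ, iteratedDeriv_one]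
  have h1 : deriv (fun y => Real.log (Real.Gamma y)) =ᶠ[𝓝 x] psi :=
    eventuallyEq_of_mem (isOpen_Ioi.mem_nhds hx) (fun y hy => (hasDerivAt_logGamma hy).deriv)
  rw [h1.deriv_eq]
  exact (hasDerivAt_psi hx).deriv

lemma hasDerivAt_F {x : ℝ} (hx : 0 < x) : HasDerivAt F (-(2 * T x)) x := by
  have hx2 : 0 < x/2 := by linarith
  have hmem : x ∈ Set.Ioo (x/2) (x+1) := ⟨by linarith, by linarith⟩
  have hsum3 : Summable (fun n : ℕ => 2 * (1/(x/2 + (n:ℝ))^3)) :=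
    (summable_pow hx2 (by norm_num)).mul_left 2
  have hg : ∀ (n : ℕ), ∀ y ∈ Set.Ioo (x/2) (x+1),
      HasDerivAt (fun z : ℝ => 1/(z+(n:ℝ))^2) (-(2/(y+(n:ℝ))^3)) y := by
    intro n y hy
    have hn0 : (0:ℝ) ≤ (n:ℝ) := Nat.cast_nonneg n
    have hyn : (0:ℝ) < y + n := by nlinarith [hy.1]
    have hne : (y + (n:ℝ)) ≠ 0 := ne_of_gt hyn
    have h0 : HasDerivAt (fun z : ℝ => (z + (n:ℝ))^2) (2*(y+(n:ℝ))) y := by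
      have := ((hasDerivAt_id y).add_const (n:ℝ)).fun_pow 2
      simpa using this
    have h1 := h0.fun_inv (by positivity)
    have e : -(2*(y+(n:ℝ))) / ((y+(n:ℝ))^2)^2 = -(2/(y+(n:ℝ))^3) := by
      field_simp
    rw [e] at h1
    simpa only [one_div] using h1
  have hg' : ∀ (n : ℕ), ∀ y ∈ Set.Ioo (x/2) (x+1),
      ‖-(2/(y+(n:ℝ))^3)‖ ≤ 2 * (1/(x/2 + (n:ℝ))^3) := by
    intro n y hy
    have hn0 : (0:ℝ) ≤ (n:ℝ) := Nat.cast_nonneg n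
    have h2 : (0:ℝ) < x/2 + n := by positivity
    have hyn : x/2 + (n:ℝ) < y + n := by linarith [hy.1]
    have hyn0 : (0:ℝ) < y + n := by linarith
    rw [Real.norm_eq_abs, abs_neg, abs_of_pos (by positivity : (0:ℝ) < 2/(y+(n:ℝ))^3),
      mul_one_div]
    gcongr
  have h := hasDerivAt_tsum_of_isPreconnected
    (u := fun n : ℕ => 2 * (1/(x/2 + (n:ℝ))^3))
    (g := fun (n : ℕ) (y : ℝ) => 1/(y+(n:ℝ))^2)
    (g' := fun (n : ℕ) (y : ℝ) => -(2/(y+(n:ℝ))^3))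
    hsum3 isOpen_Ioo ((convex_Ioo _ _).isPreconnected)
    hg hg' hmem (summable_pow hx (by norm_num)) hmem
  have e2 : ∑' (n : ℕ), -(2/(x+(n:ℝ))^3) = -(2 * T x) := by
    have e : (fun n : ℕ => -(2/(x+(n:ℝ))^3)) = fun n : ℕ => -(2 * (1/(x+(n:ℝ))^3)) := by
      funext n; rw [mul_one_div]
    rw [e, tsum_neg, tsum_mul_left, T]
  rw [e2] at h
  exact h

lemma antitone_phi : AntitoneOn (fun y => y * F y) (Set.Ioi (0:ℝ)) := by
  have hderiv : ∀ y ∈ Set.Ioi (0:ℝ), HasDerivAt (fun z => z * F z) (F y + y * -(2 * T y)) y := by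
    intro y hy
    have := (hasDerivAt_id y).fun_mul (hasDerivAt_F (Set.mem_Ioi.mp hy))
    simpa using this
  refine antitoneOn_of_deriv_nonpos (convex_Ioi 0) ?_ ?_ ?_
  · exact fun y hy => (hderiv y hy).continuousAt.continuousWithinAt
  · rw [interior_Ioi]
    exact fun y hy => (hderiv y hy).differentiableAt.differentiableWithinAt
  · rw [interior_Ioi]
    intro y hy
    rw [(hderiv y hy).deriv]
    have := key_ineq (Set.mem_Ioi.mp hy)
    nlinarith

end TrigammaAux

open Real

lemma trigamma_eq {z : ℝ} (hz : 0 < z) : trigamma z = TrigammaAux.F z :=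
  TrigammaAux.iteratedDeriv_eq hz

/-- The function `z ↦ z² ψ'(z)` is subadditive on `(0, ∞)`. -/
theorem sq_mul_trigamma_subadditive (x y : ℝ) (hx : 0 < x) (hy : 0 < y) :
    (x + y) ^ 2 * trigamma (x + y) ≤ x ^ 2 * trigamma x + y ^ 2 * trigamma y := by
  have hxy : 0 < x + y := by linarith
  rw [trigamma_eq hxy, trigamma_eq hx, trigamma_eq hy]
  have h1 : (x+y) * TrigammaAux.F (x+y) ≤ x * TrigammaAux.F x :=
    TrigammaAux.antitone_phi (Set.mem_Ioi.mpr hx) (Set.mem_Ioi.mpr hxy) (by linarith)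
  have h2 : (x+y) * TrigammaAux.F (x+y) ≤ y * TrigammaAux.F y :=
    TrigammaAux.antitone_phi (Set.mem_Ioi.mpr hy) (Set.mem_Ioi.mpr hxy) (by linarith)
  have h3 := mul_le_mul_of_nonneg_left h1 hx.le
  have h4 := mul_le_mul_of_nonneg_left h2 hy.le
  nlinarith
end

section
/- The function z ↦ 1 - z² ψ'(z) is subadditive on (0, ∞): for all x, y > 0, 1 - (x+y)² ψ'(x+y) ≤ (1 - x² ψ'(x)) + (1 - y² ψ'(y)). -/
open Real Set MeasureTheory Filter Topology Asymptotics Nat Finset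



lemma exp_neg_le_one' {t : ℝ} (ht : 0 ≤ t) : Real.exp (-t) ≤ 1 := by
  rw [Real.exp_le_one_iff]; linarith

lemma one_sub_exp_neg_nonneg {t : ℝ} (ht : 0 ≤ t) : 0 ≤ 1 - Real.exp (-t) := by
  linarith [exp_neg_le_one' ht]

lemma one_sub_exp_neg_le {t : ℝ} : 1 - Real.exp (-t) ≤ t := by
  have := Real.add_one_le_exp (-t)
  linarith

lemma key_exp_ineq {t : ℝ} (ht : 0 ≤ t) :
    2 * (1 - Real.exp (-t)) ≤ t * (1 + Real.exp (-t)) := by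
  have hderiv : ∀ s : ℝ, HasDerivAt (fun u : ℝ => u + u * Real.exp (-u) + 2 * Real.exp (-u) - 2)
      (1 - (1 + s) * Real.exp (-s)) s := by
    intro s
    have he : HasDerivAt (fun u : ℝ => Real.exp (-u)) (-Real.exp (-s)) s := by
      simpa using (((hasDerivAt_id s).neg).exp)
    have h1 : HasDerivAt (fun u : ℝ => u * Real.exp (-u))
        (1 * Real.exp (-s) + s * -Real.exp (-s)) s := (hasDerivAt_id s).mul he
    have h2 := (((hasDerivAt_id s).fun_add h1).fun_add (he.const_mul 2)).sub_const 2
    exact h2.congr_deriv (by ring)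
  have hd0 : ∀ s : ℝ, 0 ≤ 1 - (1 + s) * Real.exp (-s) := by
    intro s
    have h1 : (1 + s) * Real.exp (-s) ≤ Real.exp s * Real.exp (-s) :=
      mul_le_mul_of_nonneg_right (by linarith [Real.add_one_le_exp s]) (Real.exp_pos _).le
    rw [← Real.exp_add, add_neg_cancel, Real.exp_zero] at h1
    linarith
  have hmono : Monotone (fun u : ℝ => u + u * Real.exp (-u) + 2 * Real.exp (-u) - 2) := by
    refine monotone_of_deriv_nonneg (fun s => (hderiv s).differentiableAt) (fun s => ?_)
    rw [(hderiv s).deriv]; exact hd0 s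
  have h := hmono ht
  simp only [neg_zero, Real.exp_zero, mul_one, mul_zero, zero_mul] at h
  nlinarith [h]



lemma summable_one_div_nat_add_one_sq : Summable (fun n : ℕ => 1/((n:ℝ)+1)^2) := by
  have := Real.summable_one_div_nat_pow.mpr (le_refl 2)
  have h1 := (summable_nat_add_iff 1).mpr this
  refine h1.congr (fun n => ?_)
  push_cast
  ring

lemma integrableOn_pow_mul_exp_neg (k : ℕ) {r : ℝ} (hr : 0 < r) :
    IntegrableOn (fun t : ℝ => t ^ k * Real.exp (-(r * t))) (Ioi 0) := by
  have hcont : ContinuousOn (fun t : ℝ => t ^ k * Real.exp (-(r * t))) (Ici 0) := by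
    fun_prop
  refine integrable_of_isBigO_exp_neg (half_pos hr) hcont ?_
  have hbase : Tendsto (fun x : ℝ => x ^ k * Real.exp (-x)) atTop (𝓝 0) :=
    tendsto_pow_mul_exp_neg_atTop_nhds_zero k
  have hcomp : Tendsto (fun t : ℝ => ((r/2)*t) ^ k * Real.exp (-((r/2)*t))) atTop (𝓝 0) :=
    hbase.comp (Tendsto.const_mul_atTop (half_pos hr) tendsto_id)
  have hT : Tendsto (fun t : ℝ => t ^ k * Real.exp (-(r/2*t))) atTop (𝓝 0) := by
    have := hcomp.const_mul ((2/r)^k)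
    rw [mul_zero] at this
    refine this.congr' ?_
    filter_upwards with t
    have h1 : (2/r) * (r/2*t) = t := by field_simp
    rw [← mul_assoc, ← mul_pow, h1]
  have hev : ∀ᶠ t in atTop, t ^ k * Real.exp (-(r/2*t)) ≤ 1 :=
    hT.eventually (eventually_le_nhds one_pos)
  rw [isBigO_iff]
  refine ⟨1, ?_⟩
  filter_upwards [hev, eventually_ge_atTop (0:ℝ)] with t h1 h2
  have hsplit : Real.exp (-(r*t)) = Real.exp (-(r/2*t)) * Real.exp (-(r/2*t)) := by
    rw [← Real.exp_add]; ring_nf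
  rw [Real.norm_eq_abs, Real.norm_eq_abs, abs_of_nonneg (by positivity), one_mul,
    abs_of_nonneg (Real.exp_pos _).le, hsplit, show -(r/2) * t = -(r/2*t) by ring, ← mul_assoc]
  exact mul_le_of_le_one_left (Real.exp_pos _).le h1

lemma integral_pow_mul_exp_neg (k : ℕ) {r : ℝ} (hr : 0 < r) :
    ∫ t in Ioi (0:ℝ), t ^ k * Real.exp (-(r * t)) = (k ! : ℝ) / r ^ (k + 1) := by
  have h := integral_rpow_mul_exp_neg_mul_Ioi (a := (k:ℝ)+1) (by positivity) hr
  rw [show ((k:ℝ)+1) - 1 = (k:ℝ) by ring, Real.Gamma_nat_eq_factorial] at h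
  have h2 : ∫ t in Ioi (0:ℝ), t ^ (k:ℝ) * Real.exp (-(r * t))
      = ∫ t in Ioi (0:ℝ), t ^ k * Real.exp (-(r*t)) :=
    setIntegral_congr_fun measurableSet_Ioi (fun t _ => by rw [Real.rpow_natCast])
  rw [h2] at h
  rw [h, show ((k:ℝ)+1) = ((k+1 : ℕ):ℝ) by (push_cast; ring), Real.rpow_natCast,
    div_pow, one_pow]
  field_simp



-- log bounds
lemma log_term_nonneg {u : ℝ} (hu : 0 < u) : 0 ≤ u - Real.log (1+u) := by
  have := Real.log_le_sub_one_of_pos (show (0:ℝ) < 1+u by linarith)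
  linarith

lemma log_term_le {u : ℝ} (hu : 0 < u) : u - Real.log (1+u) ≤ u^2 := by
  have h1u : (0:ℝ) < 1+u := by linarith
  have h := Real.log_le_sub_one_of_pos (show (0:ℝ) < (1+u)⁻¹ by positivity)
  rw [Real.log_inv] at h
  have h2 : 1 - (1+u)⁻¹ ≤ Real.log (1+u) := by linarith
  have h3 : (1:ℝ) - (1+u)⁻¹ = u/(1+u) := by field_simp; ring
  rw [h3] at h2
  have h4 : u - u^2 ≤ u/(1+u) := by
    rw [le_div_iff₀ h1u]
    nlinarith
  linarith

lemma summable_W_terms {z : ℝ} (hz : 0 < z) :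
    Summable (fun n : ℕ => z/((n:ℝ)+1) - Real.log (1 + z/((n:ℝ)+1))) := by
  refine Summable.of_nonneg_of_le
    (fun n => log_term_nonneg (by positivity)) (fun n => ?_)
    (summable_one_div_nat_add_one_sq.mul_left (z^2))
  have h := log_term_le (show (0:ℝ) < z/((n:ℝ)+1) by positivity)
  calc z/((n:ℝ)+1) - Real.log (1 + z/((n:ℝ)+1)) ≤ (z/((n:ℝ)+1))^2 := h
    _ = z^2 * (1/((n:ℝ)+1)^2) := by rw [div_pow]; ring

lemma summable_W1_terms {z : ℝ} (hz : 0 < z) :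
    Summable (fun n : ℕ => 1/((n:ℝ)+1) - 1/(z+((n:ℝ)+1))) := by
  refine Summable.of_nonneg_of_le (fun n => ?_) (fun n => ?_)
    (summable_one_div_nat_add_one_sq.mul_left z)
  · have hm : (0:ℝ) < (n:ℝ)+1 := by positivity
    have : 1/(z+((n:ℝ)+1)) ≤ 1/((n:ℝ)+1) := by
      apply one_div_le_one_div_of_le hm; linarith
    linarith
  · have hm : (0:ℝ) < (n:ℝ)+1 := by positivity
    have hzm : (0:ℝ) < z+((n:ℝ)+1) := by linarith
    rw [div_sub_div _ _ hm.ne' hzm.ne', one_mul, mul_one]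
    have hnum : z+((n:ℝ)+1) - ((n:ℝ)+1) = z := by ring
    rw [hnum]
    rw [div_le_iff₀ (by positivity)]
    have : z * (1/((n:ℝ)+1)^2) * (((n:ℝ)+1) * (z+((n:ℝ)+1)))
        = z * ((z+((n:ℝ)+1))/((n:ℝ)+1)) := by field_simp
    rw [this]
    have h1 : (1:ℝ) ≤ (z+((n:ℝ)+1))/((n:ℝ)+1) := by
      rw [le_div_iff₀ hm]; linarith
    nlinarith

lemma summable_W2_terms {z : ℝ} (hz : 0 < z) :
    Summable (fun n : ℕ => 1/(z+((n:ℝ)+1))^2) := by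
  refine Summable.of_nonneg_of_le (fun n => by positivity) (fun n => ?_)
    summable_one_div_nat_add_one_sq
  have hm : (0:ℝ) < (n:ℝ)+1 := by positivity
  apply one_div_le_one_div_of_le (by positivity)
  nlinarith

lemma log_factorial (n : ℕ) :
    Real.log (n ! : ℝ) = ∑ k ∈ Finset.range n, Real.log ((k:ℝ)+1) := by
  induction n with
  | zero => simp
  | succ n ih =>
    rw [Finset.sum_range_succ, ← ih, Nat.factorial_succ]
    push_cast
    rw [Real.log_mul (by positivity) (by positivity : (0:ℝ) < (n ! : ℝ)).ne']
    ring

noncomputable def Wfun (z : ℝ) : ℝ :=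
  -(Real.eulerMascheroniConstant * z) - Real.log z
    + ∑' n : ℕ, (z/((n:ℝ)+1) - Real.log (1 + z/((n:ℝ)+1)))

lemma logGamma_eq {z : ℝ} (hz : 0 < z) : Real.log (Real.Gamma z) = Wfun z := by
  have hG : Real.Gamma z ≠ 0 := (Real.Gamma_pos_of_pos hz).ne'
  have hlim1 : Tendsto (fun n : ℕ => Real.log (Real.GammaSeq z n)) atTop
      (𝓝 (Real.log (Real.Gamma z))) :=
    ((Real.continuousAt_log hG).tendsto).comp (Real.GammaSeq_tendsto_Gamma z)
  -- the explicit form of log GammaSeq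
  have hform : ∀ n : ℕ, 1 ≤ n → Real.log (Real.GammaSeq z n)
      = -(((harmonic n : ℝ) - Real.log n) * z) - Real.log z
        + ∑ k ∈ Finset.range n, (z/((k:ℝ)+1) - Real.log (1 + z/((k:ℝ)+1))) := by
    intro n hn
    have hn0 : (0:ℝ) < (n:ℝ) := by exact_mod_cast hn
    have hprodpos : (0:ℝ) < ∏ j ∈ Finset.range (n+1), (z + (j:ℝ)) := by
      apply Finset.prod_pos
      intro j _
      have : (0:ℝ) ≤ (j:ℝ) := Nat.cast_nonneg j
      linarith
    have hfactpos : (0:ℝ) < (n ! : ℝ) := by positivity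
    rw [Real.GammaSeq, Real.log_div (by positivity) hprodpos.ne',
      Real.log_mul (by positivity) hfactpos.ne', Real.log_rpow hn0,
      Real.log_prod (fun j _ => by
        have : (0:ℝ) ≤ (j:ℝ) := Nat.cast_nonneg j
        linarith : ∀ j ∈ Finset.range (n+1), z + (j:ℝ) ≠ 0),
      log_factorial]
    -- split the j-product sum
    rw [Finset.sum_range_succ' (fun j => Real.log (z + (j:ℝ))) n]
    push_cast
    simp only [add_zero]
    -- expand harmonic
    have hharm : (harmonic n : ℝ) = ∑ k ∈ Finset.range n, 1/((k:ℝ)+1) := by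
      rw [harmonic]
      push_cast
      refine Finset.sum_congr rfl (fun k _ => ?_)
      rw [one_div]
    rw [hharm]
    -- rewrite each log(1 + z/(k+1))
    have hlog : ∀ k ∈ Finset.range n,
        z/((k:ℝ)+1) - Real.log (1 + z/((k:ℝ)+1))
          = z/((k:ℝ)+1) - (Real.log (z + ((k:ℝ)+1)) - Real.log ((k:ℝ)+1)) := by
      intro k _
      have hk : (0:ℝ) < (k:ℝ)+1 := by positivity
      have h1 : 1 + z/((k:ℝ)+1) = (z + ((k:ℝ)+1))/((k:ℝ)+1) := by
        field_simp
        ring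
      rw [h1, Real.log_div (by positivity) hk.ne']
    rw [Finset.sum_congr rfl hlog]
    simp only [Finset.sum_sub_distrib]
    have hz2 : ∑ k ∈ Finset.range n, z/((k:ℝ)+1)
        = z * ∑ k ∈ Finset.range n, 1/((k:ℝ)+1) := by
      rw [Finset.mul_sum]
      exact Finset.sum_congr rfl (fun k _ => by ring)
    rw [hz2]
    ring
  have hsum := summable_W_terms hz
  have hlim2 : Tendsto (fun n : ℕ => -(((harmonic n : ℝ) - Real.log n) * z) - Real.log z
      + ∑ k ∈ Finset.range n, (z/((k:ℝ)+1) - Real.log (1 + z/((k:ℝ)+1)))) atTop (𝓝 (Wfun z)) := by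
    have h1 : Tendsto (fun n : ℕ => (harmonic n : ℝ) - Real.log n) atTop
        (𝓝 Real.eulerMascheroniConstant) := Real.tendsto_harmonic_sub_log
    have h2 := hsum.hasSum.tendsto_sum_nat
    have h3 := ((h1.mul_const z).neg.sub_const (Real.log z)).add h2
    simpa [Wfun] using h3
  have hee : (fun n : ℕ => Real.log (Real.GammaSeq z n)) =ᶠ[atTop]
      (fun n : ℕ => -(((harmonic n : ℝ) - Real.log n) * z) - Real.log z
        + ∑ k ∈ Finset.range n, (z/((k:ℝ)+1) - Real.log (1 + z/((k:ℝ)+1)))) := by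
    filter_upwards [eventually_ge_atTop 1] with n hn using hform n hn
  exact tendsto_nhds_unique (hlim1.congr' hee) hlim2

lemma W1_term_nonneg {z : ℝ} (hz : 0 < z) (n : ℕ) :
    0 ≤ 1/((n:ℝ)+1) - 1/(z+((n:ℝ)+1)) := by
  have hm : (0:ℝ) < (n:ℝ)+1 := by positivity
  have : 1/(z+((n:ℝ)+1)) ≤ 1/((n:ℝ)+1) := by
    apply one_div_le_one_div_of_le hm; linarith
  linarith

lemma W1_term_le {z : ℝ} (hz : 0 < z) (n : ℕ) :
    1/((n:ℝ)+1) - 1/(z+((n:ℝ)+1)) ≤ z * (1/((n:ℝ)+1)^2) := by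
  have hm : (0:ℝ) < (n:ℝ)+1 := by positivity
  have hzm : (0:ℝ) < z+((n:ℝ)+1) := by linarith
  rw [div_sub_div _ _ hm.ne' hzm.ne', one_mul, mul_one,
    show z+((n:ℝ)+1) - ((n:ℝ)+1) = z by ring, div_le_iff₀ (by positivity)]
  have heq : z * (1/((n:ℝ)+1)^2) * (((n:ℝ)+1) * (z+((n:ℝ)+1)))
      = z * ((z+((n:ℝ)+1))/((n:ℝ)+1)) := by field_simp
  rw [heq]
  have h1 : (1:ℝ) ≤ (z+((n:ℝ)+1))/((n:ℝ)+1) := by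
    rw [le_div_iff₀ hm]; linarith
  nlinarith

lemma hasDerivAt_Wsum {z₀ : ℝ} (hz : 0 < z₀) :
    HasDerivAt (fun z : ℝ => ∑' n : ℕ, (z/((n:ℝ)+1) - Real.log (1 + z/((n:ℝ)+1))))
      (∑' n : ℕ, (1/((n:ℝ)+1) - 1/(z₀+((n:ℝ)+1)))) z₀ := by
  have hmem : z₀ ∈ Ioo (0:ℝ) (z₀+1) := ⟨hz, by linarith⟩
  refine hasDerivAt_of_tendstoUniformlyOn (l := atTop) (f := fun N z => ∑ k ∈ Finset.range N,
      (z/((k:ℝ)+1) - Real.log (1 + z/((k:ℝ)+1))))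
    (f' := fun N z => ∑ k ∈ Finset.range N, (1/((k:ℝ)+1) - 1/(z+((k:ℝ)+1))))
    (g := fun z : ℝ => ∑' n : ℕ, (z/((n:ℝ)+1) - Real.log (1 + z/((n:ℝ)+1))))
    (g' := fun z : ℝ => ∑' n : ℕ, (1/((n:ℝ)+1) - 1/(z+((n:ℝ)+1))))
    isOpen_Ioo ?_ ?_ ?_ hmem
  · refine tendstoUniformlyOn_tsum_nat
      ((summable_one_div_nat_add_one_sq.mul_left (z₀+1))) (fun k w hw => ?_)
    obtain ⟨hw0, hw1⟩ := hw
    rw [Real.norm_eq_abs, abs_of_nonneg (W1_term_nonneg hw0 k)]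
    calc 1/((k:ℝ)+1) - 1/(w+((k:ℝ)+1)) ≤ w * (1/((k:ℝ)+1)^2) := W1_term_le hw0 k
      _ ≤ (z₀+1) * (1/((k:ℝ)+1)^2) := by
          apply mul_le_mul_of_nonneg_right (le_of_lt hw1) (by positivity)
  · filter_upwards with N w hw
    refine HasDerivAt.fun_sum (fun k _ => ?_)
    obtain ⟨hw0, _⟩ := hw
    have hk : (0:ℝ) < (k:ℝ)+1 := by positivity
    have h1 : HasDerivAt (fun w : ℝ => w/((k:ℝ)+1)) (1/((k:ℝ)+1)) w := by
      simpa using (hasDerivAt_id w).div_const ((k:ℝ)+1)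
    have hpos : (0:ℝ) < 1 + w/((k:ℝ)+1) := by positivity
    have hlog : HasDerivAt (fun w : ℝ => Real.log (1 + w/((k:ℝ)+1)))
        ((1/((k:ℝ)+1))/(1 + w/((k:ℝ)+1))) w := (h1.const_add 1).log hpos.ne'
    have hval : (1/((k:ℝ)+1))/(1 + w/((k:ℝ)+1)) = 1/(w+((k:ℝ)+1)) := by
      rw [div_eq_div_iff hpos.ne' (by linarith : (0:ℝ) < w+((k:ℝ)+1)).ne']
      field_simp
      ring
    rw [hval] at hlog
    exact h1.sub hlog
  · intro w hw
    exact (summable_W_terms hw.1).hasSum.tendsto_sum_nat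

lemma hasDerivAt_W1sum {z₀ : ℝ} (hz : 0 < z₀) :
    HasDerivAt (fun z : ℝ => ∑' n : ℕ, (1/((n:ℝ)+1) - 1/(z+((n:ℝ)+1))))
      (∑' n : ℕ, 1/(z₀+((n:ℝ)+1))^2) z₀ := by
  refine hasDerivAt_of_tendstoUniformlyOn (l := atTop) (f := fun N z => ∑ k ∈ Finset.range N,
      (1/((k:ℝ)+1) - 1/(z+((k:ℝ)+1))))
    (f' := fun N z => ∑ k ∈ Finset.range N, 1/(z+((k:ℝ)+1))^2)
    (g := fun z : ℝ => ∑' n : ℕ, (1/((n:ℝ)+1) - 1/(z+((n:ℝ)+1))))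
    (g' := fun z : ℝ => ∑' n : ℕ, 1/(z+((n:ℝ)+1))^2)
    isOpen_Ioi ?_ ?_ ?_ hz
  · refine tendstoUniformlyOn_tsum_nat summable_one_div_nat_add_one_sq (fun k w hw => ?_)
    have hw0 : (0:ℝ) < w := hw
    have hk : (0:ℝ) < (k:ℝ)+1 := by positivity
    rw [Real.norm_eq_abs, abs_of_nonneg (by positivity)]
    apply one_div_le_one_div_of_le (by positivity)
    nlinarith
  · filter_upwards with N w hw
    refine HasDerivAt.fun_sum (fun k _ => ?_)
    have hw0 : (0:ℝ) < w := hw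
    have hk : (0:ℝ) < (k:ℝ)+1 := by positivity
    have hwk : (0:ℝ) < w+((k:ℝ)+1) := by linarith
    have hinv : HasDerivAt (fun w : ℝ => (w+((k:ℝ)+1))⁻¹)
        (-1/(w+((k:ℝ)+1))^2) w := by
      have := ((hasDerivAt_id w).add_const ((k:ℝ)+1)).fun_inv hwk.ne'
      simpa using this
    have h2 := hinv.const_sub (1/((k:ℝ)+1))
    have hval : -(-1/(w+((k:ℝ)+1))^2) = 1/(w+((k:ℝ)+1))^2 := by ring
    rw [hval] at h2
    simpa [one_div] using h2
  · intro w hw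
    exact (summable_W1_terms hw).hasSum.tendsto_sum_nat




-- integrability of (m²t - 2m)e^{-mt}e^{-ct}
lemma Ic_integrable {m c : ℝ} (hm : 0 < m) (hc : 0 ≤ c) :
    IntegrableOn (fun t : ℝ => (m^2*t - 2*m) * Real.exp (-(m*t)) * Real.exp (-(c*t))) (Ioi 0) := by
  have hmc : 0 < m + c := by linarith
  have h1 := (integrableOn_pow_mul_exp_neg 1 hmc).const_mul (m^2)
  have h0 := (integrableOn_pow_mul_exp_neg 0 hmc).const_mul (2*m)
  refine IntegrableOn.congr_fun (h1.sub h0) (fun t _ => ?_) measurableSet_Ioi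
  simp only [Pi.sub_apply, pow_one, pow_zero, one_mul, mul_one]
  symm
  rw [mul_assoc, ← Real.exp_add, show (-(m*t) + -(c*t)) = -((m+c)*t) by ring]
  ring

lemma Ic_eval {m c : ℝ} (hm : 0 < m) (hc : 0 ≤ c) :
    ∫ t in Ioi (0:ℝ), (m^2*t - 2*m) * Real.exp (-(m*t)) * Real.exp (-(c*t))
      = c^2/(m+c)^2 - 1 := by
  have hmc : 0 < m + c := by linarith
  have h1 := (integrableOn_pow_mul_exp_neg 1 hmc).const_mul (m^2)
  have h0 := (integrableOn_pow_mul_exp_neg 0 hmc).const_mul (2*m)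
  have hcongr : ∫ t in Ioi (0:ℝ), (m^2*t - 2*m) * Real.exp (-(m*t)) * Real.exp (-(c*t))
      = ∫ t in Ioi (0:ℝ), (m^2 * (t^1 * Real.exp (-((m+c)*t))) - 2*m * (t^0 * Real.exp (-((m+c)*t)))) := by
    refine setIntegral_congr_fun measurableSet_Ioi (fun t _ => ?_)
    rw [mul_assoc, ← Real.exp_add, show (-(m*t) + -(c*t)) = -((m+c)*t) by ring]
    ring
  rw [hcongr, integral_sub h1 h0, integral_const_mul, integral_const_mul,
    integral_pow_mul_exp_neg 1 hmc, integral_pow_mul_exp_neg 0 hmc]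
  have : (1! : ℝ) = 1 := by norm_num
  rw [this]
  have : (0! : ℝ) = 1 := by norm_num
  rw [this]
  field_simp
  ring

section Fsec
variable {x y : ℝ} (hx : 0 < x) (hy : 0 < y)

-- helpful bounds
/-- the integrand family -/
noncomputable def Fint (x y : ℝ) (n : ℕ) (t : ℝ) : ℝ :=
  (((n:ℝ)+1)^2*t - 2*((n:ℝ)+1)) * Real.exp (-(((n:ℝ)+1)*t)) *
    ((1 - Real.exp (-(x*t))) * (1 - Real.exp (-(y*t))))

include hx hy in
lemma Fint_integrable (n : ℕ) : IntegrableOn (Fint x y n) (Ioi 0) := by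
  have hm : (0:ℝ) < (n:ℝ)+1 := by positivity
  have h1 := (integrableOn_pow_mul_exp_neg 1 hm).const_mul (((n:ℝ)+1)^2)
  have h0 := (integrableOn_pow_mul_exp_neg 0 hm).const_mul (2*((n:ℝ)+1))
  have hg : IntegrableOn (fun t : ℝ => (((n:ℝ)+1)^2*(t^1*Real.exp (-(((n:ℝ)+1)*t)))
      + 2*((n:ℝ)+1)*(t^0*Real.exp (-(((n:ℝ)+1)*t))))) (Ioi 0) := h1.add h0
  refine Integrable.mono' hg ?_ ?_
  · refine (Continuous.continuousOn ?_).aestronglyMeasurable measurableSet_Ioi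
    unfold Fint; fun_prop
  · rw [ae_restrict_iff' measurableSet_Ioi]
    refine ae_of_all _ (fun t ht => ?_)
    have ht' : (0:ℝ) ≤ t := (le_of_lt ht)
    have hxt : 0 ≤ 1 - Real.exp (-(x*t)) := one_sub_exp_neg_nonneg (mul_nonneg hx.le ht')
    have hyt : 0 ≤ 1 - Real.exp (-(y*t)) := one_sub_exp_neg_nonneg (mul_nonneg hy.le ht')
    have hx1 : 1 - Real.exp (-(x*t)) ≤ 1 := by linarith [Real.exp_pos (-(x*t))]
    have hy1 : 1 - Real.exp (-(y*t)) ≤ 1 := by linarith [Real.exp_pos (-(y*t))]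
    have hP : 0 ≤ (1 - Real.exp (-(x*t))) * (1 - Real.exp (-(y*t))) := mul_nonneg hxt hyt
    have hP1 : (1 - Real.exp (-(x*t))) * (1 - Real.exp (-(y*t))) ≤ 1 := by nlinarith
    have he : (0:ℝ) < Real.exp (-(((n:ℝ)+1)*t)) := Real.exp_pos _
    rw [Real.norm_eq_abs, Fint, abs_mul, abs_mul]
    rw [abs_of_nonneg hP, abs_of_nonneg he.le]
    have habs : |(((n:ℝ)+1)^2*t - 2*((n:ℝ)+1))| ≤ ((n:ℝ)+1)^2*t + 2*((n:ℝ)+1) := by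
      rw [abs_le]; constructor <;> nlinarith
    calc |(((n:ℝ)+1)^2*t - 2*((n:ℝ)+1))| * Real.exp (-(((n:ℝ)+1)*t)) *
          ((1 - Real.exp (-(x*t))) * (1 - Real.exp (-(y*t))))
        ≤ ((((n:ℝ)+1)^2*t + 2*((n:ℝ)+1)) * Real.exp (-(((n:ℝ)+1)*t))) * 1 := by
          apply mul_le_mul _ hP1 hP (by positivity)
          exact mul_le_mul_of_nonneg_right habs he.le
      _ = (((n:ℝ)+1)^2*(t^1*Real.exp (-(((n:ℝ)+1)*t)))
          + 2*((n:ℝ)+1)*(t^0*Real.exp (-(((n:ℝ)+1)*t)))) := by ring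

include hx hy in
lemma Fint_delta (n : ℕ) :
    ∫ t in Ioi (0:ℝ), Fint x y n t
      = ((x+y)/((x+y)+((n:ℝ)+1)))^2 - (x/(x+((n:ℝ)+1)))^2 - (y/(y+((n:ℝ)+1)))^2 := by
  have hm : (0:ℝ) < (n:ℝ)+1 := by positivity
  have hI0 := Ic_integrable hm (le_refl 0)
  have hIx := Ic_integrable hm hx.le
  have hIy := Ic_integrable hm hy.le
  have hIxy := Ic_integrable hm (by linarith : (0:ℝ) ≤ x + y)
  have hA : IntegrableOn (fun t : ℝ => (((n:ℝ)+1)^2*t - 2*((n:ℝ)+1)) * Real.exp (-(((n:ℝ)+1)*t)) * Real.exp (-((0:ℝ)*t))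
      + (((n:ℝ)+1)^2*t - 2*((n:ℝ)+1)) * Real.exp (-(((n:ℝ)+1)*t)) * Real.exp (-((x+y)*t))) (Ioi 0) := hI0.add hIxy
  have hB : IntegrableOn (fun t : ℝ => (((n:ℝ)+1)^2*t - 2*((n:ℝ)+1)) * Real.exp (-(((n:ℝ)+1)*t)) * Real.exp (-(x*t))
      + (((n:ℝ)+1)^2*t - 2*((n:ℝ)+1)) * Real.exp (-(((n:ℝ)+1)*t)) * Real.exp (-(y*t))) (Ioi 0) := hIx.add hIy
  have hsplit : ∀ t ∈ Ioi (0:ℝ), Fint x y n t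
      = ((((n:ℝ)+1)^2*t - 2*((n:ℝ)+1)) * Real.exp (-(((n:ℝ)+1)*t)) * Real.exp (-((0:ℝ)*t))
        + (((n:ℝ)+1)^2*t - 2*((n:ℝ)+1)) * Real.exp (-(((n:ℝ)+1)*t)) * Real.exp (-((x+y)*t)))
        - ((((n:ℝ)+1)^2*t - 2*((n:ℝ)+1)) * Real.exp (-(((n:ℝ)+1)*t)) * Real.exp (-(x*t))
        + (((n:ℝ)+1)^2*t - 2*((n:ℝ)+1)) * Real.exp (-(((n:ℝ)+1)*t)) * Real.exp (-(y*t))) := by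
    intro t _
    rw [Fint]
    have hxy : Real.exp (-((x+y)*t)) = Real.exp (-(x*t)) * Real.exp (-(y*t)) := by
      rw [← Real.exp_add]; ring_nf
    have h0 : Real.exp (-((0:ℝ)*t)) = 1 := by norm_num
    rw [hxy, h0]
    ring
  rw [setIntegral_congr_fun measurableSet_Ioi hsplit, integral_sub hA hB,
    integral_add hI0 hIxy, integral_add hIx hIy,
    Ic_eval hm (le_refl 0), Ic_eval hm hx.le, Ic_eval hm hy.le,
    Ic_eval hm (by linarith : (0:ℝ) ≤ x+y)]
  have hxm : x + ((n:ℝ)+1) ≠ 0 := by positivity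
  have hym : y + ((n:ℝ)+1) ≠ 0 := by positivity
  have hxym : x + y + ((n:ℝ)+1) ≠ 0 := by positivity
  field_simp
  ring

include hx hy in
lemma Fint_norm_integral_le (n : ℕ) :
    ∫ t in Ioi (0:ℝ), ‖Fint x y n t‖ ≤ 10*x*y/((n:ℝ)+1)^2 := by
  have hm : (0:ℝ) < (n:ℝ)+1 := by positivity
  have hG3 := (integrableOn_pow_mul_exp_neg 3 hm).const_mul (x*y*((n:ℝ)+1)^2)
  have hG2 := (integrableOn_pow_mul_exp_neg 2 hm).const_mul (x*y*(2*((n:ℝ)+1)))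
  have hG : IntegrableOn (fun t : ℝ => x*y*((n:ℝ)+1)^2 * (t^3*Real.exp (-(((n:ℝ)+1)*t)))
      + x*y*(2*((n:ℝ)+1)) * (t^2*Real.exp (-(((n:ℝ)+1)*t)))) (Ioi 0) := hG3.add hG2
  have hFi := Fint_integrable hx hy n
  have hle : ∀ t ∈ Ioi (0:ℝ), ‖Fint x y n t‖
      ≤ x*y*((n:ℝ)+1)^2 * (t^3*Real.exp (-(((n:ℝ)+1)*t)))
        + x*y*(2*((n:ℝ)+1)) * (t^2*Real.exp (-(((n:ℝ)+1)*t))) := by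
    intro t ht
    have ht' : (0:ℝ) ≤ t := le_of_lt ht
    have hxt : 0 ≤ 1 - Real.exp (-(x*t)) := one_sub_exp_neg_nonneg (mul_nonneg hx.le ht')
    have hyt : 0 ≤ 1 - Real.exp (-(y*t)) := one_sub_exp_neg_nonneg (mul_nonneg hy.le ht')
    have hxle : 1 - Real.exp (-(x*t)) ≤ x*t := one_sub_exp_neg_le
    have hyle : 1 - Real.exp (-(y*t)) ≤ y*t := one_sub_exp_neg_le
    have hP : (1 - Real.exp (-(x*t))) * (1 - Real.exp (-(y*t))) ≤ (x*t)*(y*t) := by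
      apply mul_le_mul hxle hyle hyt (by positivity)
    have hPn : 0 ≤ (1 - Real.exp (-(x*t))) * (1 - Real.exp (-(y*t))) := mul_nonneg hxt hyt
    have he : (0:ℝ) < Real.exp (-(((n:ℝ)+1)*t)) := Real.exp_pos _
    have habs : |(((n:ℝ)+1)^2*t - 2*((n:ℝ)+1))| ≤ ((n:ℝ)+1)^2*t + 2*((n:ℝ)+1) := by
      rw [abs_le]; constructor <;> nlinarith
    rw [Real.norm_eq_abs, Fint, abs_mul, abs_mul, abs_of_nonneg hPn, abs_of_nonneg he.le]
    calc |(((n:ℝ)+1)^2*t - 2*((n:ℝ)+1))| * Real.exp (-(((n:ℝ)+1)*t)) *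
          ((1 - Real.exp (-(x*t))) * (1 - Real.exp (-(y*t))))
        ≤ ((((n:ℝ)+1)^2*t + 2*((n:ℝ)+1)) * Real.exp (-(((n:ℝ)+1)*t))) * ((x*t)*(y*t)) := by
          apply mul_le_mul _ hP hPn (by positivity)
          exact mul_le_mul_of_nonneg_right habs he.le
      _ = x*y*((n:ℝ)+1)^2 * (t^3*Real.exp (-(((n:ℝ)+1)*t)))
          + x*y*(2*((n:ℝ)+1)) * (t^2*Real.exp (-(((n:ℝ)+1)*t))) := by ring
  have h1 : ∫ t in Ioi (0:ℝ), ‖Fint x y n t‖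
      ≤ ∫ t in Ioi (0:ℝ), (x*y*((n:ℝ)+1)^2 * (t^3*Real.exp (-(((n:ℝ)+1)*t)))
        + x*y*(2*((n:ℝ)+1)) * (t^2*Real.exp (-(((n:ℝ)+1)*t)))) := by
    refine setIntegral_mono_on hFi.norm hG measurableSet_Ioi hle
  refine h1.trans (le_of_eq ?_)
  rw [integral_add hG3 hG2, integral_const_mul, integral_const_mul,
    integral_pow_mul_exp_neg 3 hm, integral_pow_mul_exp_neg 2 hm]
  have h3 : ((3:ℕ)! : ℝ) = 6 := by norm_num [Nat.factorial]
  have h2 : ((2:ℕ)! : ℝ) = 2 := by norm_num [Nat.factorial]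
  rw [h3, h2]
  field_simp
  ring

include hx hy in
lemma Fint_summable_norm :
    Summable (fun n : ℕ => ∫ t in Ioi (0:ℝ), ‖Fint x y n t‖) := by
  have hmaj : Summable (fun n : ℕ => 10*x*y/((n:ℝ)+1)^2) := by
    have h0 : Summable (fun n : ℕ => 1/((n:ℝ)+1)^2) := by
      have := Real.summable_one_div_nat_pow.mpr (le_refl 2)
      have h1 := (summable_nat_add_iff 1).mpr this
      refine h1.congr (fun n => ?_)
      push_cast
      ring
    have := h0.mul_left (10*x*y)
    refine this.congr (fun n => ?_)
    field_simp
  refine Summable.of_nonneg_of_le (fun n => ?_) (fun n => Fint_norm_integral_le hx hy n) hmaj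
  exact integral_nonneg (fun t => norm_nonneg _)

include hx hy in
lemma tsum_Fint_nonneg {t : ℝ} (ht : 0 < t) : 0 ≤ ∑' n : ℕ, Fint x y n t := by
  have hr0 : 0 < Real.exp (-t) := Real.exp_pos _
  have hr1 : Real.exp (-t) < 1 := Real.exp_lt_one_iff.mpr (by linarith)
  set r : ℝ := Real.exp (-t) with hrdef
  have hrabs : ‖r‖ < 1 := by rw [Real.norm_eq_abs, abs_of_pos hr0]; exact hr1
  have ha : Summable (fun n : ℕ => ((n:ℝ))^2 * r^n) :=
    summable_pow_mul_geometric_of_norm_lt_one 2 hrabs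
  have hb : Summable (fun n : ℕ => (n:ℝ) * r^n) := by
    simpa using summable_pow_mul_geometric_of_norm_lt_one 1 hrabs
  have ha' : Summable (fun n : ℕ => ((n:ℝ)+1)^2 * r^(n+1)) := by
    have := (summable_nat_add_iff 1).mpr ha
    refine this.congr (fun n => ?_)
    push_cast
    ring
  have hb' : Summable (fun n : ℕ => ((n:ℝ)+1) * r^(n+1)) := by
    have := (summable_nat_add_iff 1).mpr hb
    refine this.congr (fun n => ?_)
    push_cast
    ring
  set A : ℝ := ∑' n : ℕ, ((n:ℝ))^2 * r^n with hAdef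
  set B : ℝ := ∑' n : ℕ, (n:ℝ) * r^n with hBdef
  have hshiftA : ∑' n : ℕ, ((n:ℝ)+1)^2 * r^(n+1) = A := by
    rw [hAdef, Summable.tsum_eq_zero_add ha]
    push_cast
    simp
  have hshiftB : ∑' n : ℕ, ((n:ℝ)+1) * r^(n+1) = B := by
    rw [hBdef, Summable.tsum_eq_zero_add hb]
    push_cast
    simp
  have hra : Summable (fun n : ℕ => ((n:ℝ))^2 * r^(n+1)) := by
    refine (ha.mul_left r).congr (fun n => ?_)
    ring
  have hrb : Summable (fun n : ℕ => ((n:ℝ)) * r^(n+1)) := by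
    refine (hb.mul_left r).congr (fun n => ?_)
    ring
  have hrA : r * A = ∑' n : ℕ, ((n:ℝ))^2 * r^(n+1) := by
    rw [hAdef, ← tsum_mul_left]
    exact tsum_congr (fun n => by ring)
  have hrB : r * B = ∑' n : ℕ, ((n:ℝ)) * r^(n+1) := by
    rw [hBdef, ← tsum_mul_left]
    exact tsum_congr (fun n => by ring)
  have hK2 : (1 - r) * A = (1 + r) * B := by
    have e1 : (1 - r) * A = ∑' n : ℕ, (2*(n:ℝ)+1) * r^(n+1) := by
      have : (1 - r) * A = A - r * A := by ring
      rw [this, hrA, ← hshiftA, ← Summable.tsum_sub ha' hra]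
      exact tsum_congr (fun n => by ring)
    have e2 : (1 + r) * B = ∑' n : ℕ, (2*(n:ℝ)+1) * r^(n+1) := by
      have : (1 + r) * B = B + r * B := by ring
      rw [this, hrB, ← hshiftB, ← Summable.tsum_add hb' hrb]
      exact tsum_congr (fun n => by ring)
    rw [e1, e2]
  have hA0 : 0 ≤ A := tsum_nonneg (fun n => by positivity)
  have hB0 : 0 ≤ B := tsum_nonneg (fun n => by positivity)
  -- rewrite the sum
  have hterm : ∀ n : ℕ, Fint x y n t
      = (t * (((n:ℝ)+1)^2 * r^(n+1)) - 2 * (((n:ℝ)+1) * r^(n+1)))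
        * ((1 - Real.exp (-(x*t))) * (1 - Real.exp (-(y*t)))) := by
    intro n
    rw [Fint, show -(((n:ℝ)+1)*t) = ((n+1:ℕ):ℝ) * (-t) by (push_cast; ring),
      Real.exp_nat_mul, ← hrdef]
    ring
  have hsum_c : Summable (fun n : ℕ =>
      t * (((n:ℝ)+1)^2 * r^(n+1)) - 2 * (((n:ℝ)+1) * r^(n+1))) :=
    (ha'.mul_left t).sub (hb'.mul_left 2)
  calc (0:ℝ) ≤ (∑' n : ℕ, (t * (((n:ℝ)+1)^2 * r^(n+1)) - 2 * (((n:ℝ)+1) * r^(n+1))))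
        * ((1 - Real.exp (-(x*t))) * (1 - Real.exp (-(y*t)))) := by
        have hQ : ∑' n : ℕ, (t * (((n:ℝ)+1)^2 * r^(n+1)) - 2 * (((n:ℝ)+1) * r^(n+1)))
            = t * A - 2 * B := by
          rw [Summable.tsum_sub (ha'.mul_left t) (hb'.mul_left 2), tsum_mul_left, tsum_mul_left,
            hshiftA, hshiftB]
        rw [hQ]
        have hkey := key_exp_ineq ht.le
        rw [← hrdef] at hkey
        have hQ0 : 0 ≤ t * A - 2 * B := by nlinarith [mul_le_mul_of_nonneg_right hkey hA0]
        have hPn : 0 ≤ (1 - Real.exp (-(x*t))) * (1 - Real.exp (-(y*t))) :=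
          mul_nonneg (one_sub_exp_neg_nonneg (mul_nonneg hx.le ht.le))
            (one_sub_exp_neg_nonneg (mul_nonneg hy.le ht.le))
        exact mul_nonneg hQ0 hPn
    _ = ∑' n : ℕ, Fint x y n t := by
        rw [← tsum_mul_right]
        exact tsum_congr (fun n => (hterm n).symm)


lemma summable_sq_ratio {z : ℝ} (hz : 0 < z) :
    Summable (fun n : ℕ => (z/(z+((n:ℝ)+1)))^2) := by
  refine Summable.of_nonneg_of_le (fun n => sq_nonneg _) (fun n => ?_)
    ((summable_one_div_nat_add_one_sq).mul_left (z^2))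
  have hm : (0:ℝ) < (n:ℝ)+1 := by positivity
  rw [div_pow]
  have h1 : ((n:ℝ)+1)^2 ≤ (z+((n:ℝ)+1))^2 := by nlinarith
  calc z^2/(z+((n:ℝ)+1))^2 ≤ z^2/((n:ℝ)+1)^2 :=
        div_le_div_of_nonneg_left (sq_nonneg z) (by positivity) h1
    _ = z^2 * (1/((n:ℝ)+1)^2) := by ring

include hx hy in
lemma S_superadd :
    (∑' n : ℕ, (x/(x+((n:ℝ)+1)))^2) + (∑' n : ℕ, (y/(y+((n:ℝ)+1)))^2)
      ≤ ∑' n : ℕ, ((x+y)/((x+y)+((n:ℝ)+1)))^2 := by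
  have hsW : Summable (fun n : ℕ => ((x+y)/((x+y)+((n:ℝ)+1)))^2) :=
    summable_sq_ratio (by linarith)
  have hsU : Summable (fun n : ℕ => (x/(x+((n:ℝ)+1)))^2) := summable_sq_ratio hx
  have hsV : Summable (fun n : ℕ => (y/(y+((n:ℝ)+1)))^2) := summable_sq_ratio hy
  have hswap := MeasureTheory.integral_tsum_of_summable_integral_norm
    (μ := MeasureTheory.volume.restrict (Ioi (0:ℝ))) (F := fun n => Fint x y n)
    (fun n => Fint_integrable hx hy n) (Fint_summable_norm hx hy)
  have hpos : 0 ≤ ∫ t in Ioi (0:ℝ), ∑' n : ℕ, Fint x y n t :=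
    setIntegral_nonneg measurableSet_Ioi (fun t ht => tsum_Fint_nonneg hx hy ht)
  have hkey : 0 ≤ ∑' n : ℕ, ∫ t in Ioi (0:ℝ), Fint x y n t := by
    rw [hswap]; exact hpos
  have hdelta : (∑' n : ℕ, ∫ t in Ioi (0:ℝ), Fint x y n t)
      = ∑' n : ℕ, (((x+y)/((x+y)+((n:ℝ)+1)))^2 - (x/(x+((n:ℝ)+1)))^2 - (y/(y+((n:ℝ)+1)))^2) :=
    tsum_congr (fun n => Fint_delta hx hy n)
  rw [hdelta] at hkey
  have hsplit : ∑' n : ℕ, (((x+y)/((x+y)+((n:ℝ)+1)))^2 - (x/(x+((n:ℝ)+1)))^2 - (y/(y+((n:ℝ)+1)))^2)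
      = (∑' n : ℕ, ((x+y)/((x+y)+((n:ℝ)+1)))^2) - (∑' n : ℕ, (x/(x+((n:ℝ)+1)))^2)
        - (∑' n : ℕ, (y/(y+((n:ℝ)+1)))^2) := by
    rw [Summable.tsum_sub (hsW.sub hsU) hsV, Summable.tsum_sub hsW hsU]
  rw [hsplit] at hkey
  linarith

end Fsec

lemma trigamma_eq_s9 {z : ℝ} (hz : 0 < z) :
    trigamma z = 1/z^2 + ∑' n : ℕ, 1/(z+((n:ℝ)+1))^2 := by
  have hW : ∀ w : ℝ, 0 < w → HasDerivAt Wfun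
      (-Real.eulerMascheroniConstant - 1/w
        + ∑' n : ℕ, (1/((n:ℝ)+1) - 1/(w+((n:ℝ)+1)))) w := by
    intro w hw
    have h1 : HasDerivAt (fun u : ℝ => -(Real.eulerMascheroniConstant * u))
        (-Real.eulerMascheroniConstant) w := by
      simpa using ((hasDerivAt_id w).const_mul Real.eulerMascheroniConstant).fun_neg
    have h2 : HasDerivAt Real.log (1/w) w := by
      simpa [one_div] using Real.hasDerivAt_log hw.ne'
    have h3 := hasDerivAt_Wsum hw
    have := (h1.fun_sub h2).fun_add h3
    exact this
  have hWd : HasDerivAt (fun w : ℝ => -Real.eulerMascheroniConstant - 1/w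
      + ∑' n : ℕ, (1/((n:ℝ)+1) - 1/(w+((n:ℝ)+1))))
      (1/z^2 + ∑' n : ℕ, 1/(z+((n:ℝ)+1))^2) z := by
    have k1 : HasDerivAt (fun w : ℝ => -Real.eulerMascheroniConstant - 1/w) (1/z^2) z := by
      have := (hasDerivAt_inv hz.ne').const_sub (-Real.eulerMascheroniConstant)
      have heq : -(-((z:ℝ)^2)⁻¹) = 1/z^2 := by field_simp
      rw [heq] at this
      simpa [one_div] using this
    exact k1.add (hasDerivAt_W1sum hz)
  have heq : (fun u : ℝ => Real.log (Real.Gamma u)) =ᶠ[𝓝 z] Wfun :=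
    Filter.eventuallyEq_of_mem (Ioi_mem_nhds hz) (fun w hw => logGamma_eq hw)
  have hd1 : deriv (fun u : ℝ => Real.log (Real.Gamma u)) =ᶠ[𝓝 z] deriv Wfun := heq.deriv
  have hd2 : deriv Wfun =ᶠ[𝓝 z] (fun w : ℝ => -Real.eulerMascheroniConstant - 1/w
      + ∑' n : ℕ, (1/((n:ℝ)+1) - 1/(w+((n:ℝ)+1)))) :=
    Filter.eventuallyEq_of_mem (Ioi_mem_nhds hz) (fun w hw => (hW w hw).deriv)
  have hfinal := (hd1.trans hd2).deriv_eq
  rw [trigamma, iteratedDeriv_succ, iteratedDeriv_one, hfinal, hWd.deriv]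


/-- The function `z ↦ 1 - z² ψ'(z)` is subadditive on `(0, ∞)`. -/
theorem one_sub_sq_mul_trigamma_subadditive (x y : ℝ) (hx : 0 < x) (hy : 0 < y) :
    1 - (x + y) ^ 2 * trigamma (x + y) ≤
      (1 - x ^ 2 * trigamma x) + (1 - y ^ 2 * trigamma y) := by
  have key : ∀ z : ℝ, 0 < z → 1 - z ^ 2 * trigamma z
      = -(∑' n : ℕ, (z/(z+((n:ℝ)+1)))^2) := by
    intro z hz
    rw [trigamma_eq_s9 hz, mul_add]
    have h1 : z^2 * (1/z^2) = 1 := by field_simp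
    have h2 : z^2 * ∑' n : ℕ, 1/(z+((n:ℝ)+1))^2 = ∑' n : ℕ, (z/(z+((n:ℝ)+1)))^2 := by
      rw [← tsum_mul_left]
      exact tsum_congr (fun n => by rw [div_pow]; ring)
    rw [h1, h2]; ring
  rw [key _ (by linarith), key _ hx, key _ hy]
  have h := S_superadd hx hy
  linarith
end

section
/- If p ~ Gamma(a, b) and given p, c ~ Poisson(λp), then E[log p · 1{c ≥ 1}] = (ψ(a) - log b)(1 - (1+λ/b)^{-a}) + log(1+λ/b) · (1+λ/b)^{-a}, where ψ is the digamma function. -/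
open MeasureTheory Real

/-- Pulling a constant out of a set integral of real functions. -/
lemma setIntegral_Ioi_const_mul (c : ℝ) (f : ℝ → ℝ) :
    ∫ x in Set.Ioi (0 : ℝ), c * f x = c * ∫ x in Set.Ioi (0 : ℝ), f x := by
  have := integral_smul (μ := MeasureTheory.volume.restrict (Set.Ioi 0)) c f
  simpa [smul_eq_mul] using this

open Filter Set Asymptotics in
/-- The Euler-integral representation of the derivative of the real Gamma function,
together with the integrability of the integrand. -/
lemma gamma_deriv_aux (a : ℝ) (ha : 0 < a) :
    IntegrableOn (fun t : ℝ => Real.log t * (t ^ (a - 1) * Real.exp (-t))) (Set.Ioi 0) ∧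
      HasDerivAt Real.Gamma
        (∫ t in Set.Ioi (0 : ℝ), Real.log t * (t ^ (a - 1) * Real.exp (-t))) a := by
  set f : ℝ → ℂ := fun x => ((Real.exp (-x) : ℝ) : ℂ) with hf
  have hfc : LocallyIntegrableOn f (Set.Ioi 0) := by
    refine (Continuous.continuousOn ?_).locallyIntegrableOn measurableSet_Ioi
    exact Complex.continuous_ofReal.comp (Real.continuous_exp.comp continuous_neg)
  have hf_top : f =O[atTop] (· ^ (-(a + 1))) := by
    rw [← isBigO_norm_left]
    simp_rw [hf, Complex.norm_real, isBigO_norm_left]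
    simpa only [neg_one_mul] using (isLittleO_exp_neg_mul_rpow_atTop zero_lt_one _).isBigO
  have hf_bot : f =O[nhdsWithin 0 (Set.Ioi 0)] (· ^ (-(0 : ℝ))) := by
    simp_rw [neg_zero, Real.rpow_zero]
    refine isBigO_const_of_tendsto (?_ : Tendsto _ _ (nhds (1 : ℂ))) one_ne_zero
    rw [(by simp : (1 : ℂ) = Real.exp (-0))]
    exact (Complex.continuous_ofReal.comp
      (Real.continuous_exp.comp continuous_neg)).continuousWithinAt
  have h := mellin_hasDerivAt_of_isBigO_rpow (s := (a : ℂ)) hfc hf_top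
    (by rw [Complex.ofReal_re]; linarith) hf_bot (by rwa [Complex.ofReal_re])
  have key : ∀ t ∈ Set.Ioi (0 : ℝ),
      (fun t : ℝ => (t : ℂ) ^ ((a : ℂ) - 1) • (Real.log t • f t)) t =
        ((Real.log t * (t ^ (a - 1) * Real.exp (-t)) : ℝ) : ℂ) := by
    intro t ht
    simp only [hf, smul_eq_mul, Complex.real_smul]
    rw [show ((a : ℂ) - 1) = ((a - 1 : ℝ) : ℂ) by push_cast; ring,
      ← Complex.ofReal_cpow ht.le]
    push_cast
    ring
  constructor
  · have h2 : IntegrableOn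
        (fun t : ℝ => ((Real.log t * (t ^ (a - 1) * Real.exp (-t)) : ℝ) : ℂ))
        (Set.Ioi 0) := h.1.congr_fun key measurableSet_Ioi
    have h3 := h2.re
    simpa only [RCLike.re_to_complex, Complex.ofReal_re, IntegrableOn] using h3
  · have hv : mellin (fun t => Real.log t • f t) (a : ℂ) =
        ((∫ t in Set.Ioi (0 : ℝ), Real.log t * (t ^ (a - 1) * Real.exp (-t)) : ℝ) : ℂ) := by
      rw [mellin, setIntegral_congr_fun measurableSet_Ioi key]
      exact integral_ofReal
    have hGI : HasDerivAt Complex.GammaIntegral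
        (mellin (fun t => Real.log t • f t) (a : ℂ)) (a : ℂ) := by
      have := h.2
      rwa [show mellin f = Complex.GammaIntegral by
        rw [Complex.GammaIntegral_eq_mellin]] at this
    have hopen : {z : ℂ | 0 < z.re} ∈ nhds ((a : ℝ) : ℂ) :=
      (isOpen_lt continuous_const Complex.continuous_re).mem_nhds (by simpa using ha)
    have hGamma : HasDerivAt Complex.Gamma
        (mellin (fun t => Real.log t • f t) (a : ℂ)) (a : ℂ) :=
      hGI.congr_of_eventuallyEq (eventuallyEq_of_mem hopen fun z hz =>
        Complex.Gamma_eq_integral hz)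
    have hreal := hGamma.real_of_complex
    rw [hv, Complex.ofReal_re] at hreal
    exact hreal

/-- The log-moment integral for the Gamma distribution with rate `β`. -/
lemma integral_log_rpow_exp (a : ℝ) (ha : 0 < a) {β : ℝ} (hβ : 0 < β) :
    IntegrableOn (fun t : ℝ => Real.log t * (t ^ (a - 1) * Real.exp (-(β * t)))) (Set.Ioi 0) ∧
      ∫ t in Set.Ioi (0 : ℝ), Real.log t * (t ^ (a - 1) * Real.exp (-(β * t))) =
        (deriv Real.Gamma a - Real.Gamma a * Real.log β) / β ^ a := by
  obtain ⟨hint, hder⟩ := gamma_deriv_aux a ha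
  set g : ℝ → ℝ := fun t => Real.log t * (t ^ (a - 1) * Real.exp (-t)) with hg
  have hpow : β ^ (1 - a) * β ^ (a - 1) = 1 := by
    rw [← Real.rpow_add hβ]; norm_num
  have hx : ∀ x ∈ Set.Ioi (0 : ℝ),
      β ^ (1 - a) * g (β * x) - Real.log β * (x ^ (a - 1) * Real.exp (-(β * x))) =
        Real.log x * (x ^ (a - 1) * Real.exp (-(β * x))) := by
    intro x hx
    simp only [hg]
    rw [Real.log_mul hβ.ne' (ne_of_gt hx), Real.mul_rpow hβ.le (le_of_lt hx)]
    linear_combination (Real.log β + Real.log x) * (x ^ (a - 1) * Real.exp (-(β * x))) * hpow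
  have hcomp : IntegrableOn (fun x : ℝ => g (β * x)) (Set.Ioi 0) := by
    exact (integrableOn_Ioi_comp_mul_left_iff g 0 hβ).mpr (by rw [mul_zero]; exact hint)
  have hGi : IntegrableOn (fun x : ℝ => x ^ (a - 1) * Real.exp (-(β * x))) (Set.Ioi 0) := by
    have h0 : IntegrableOn (fun x : ℝ => Real.exp (-x) * x ^ (a - 1)) (Set.Ioi 0) :=
      Real.GammaIntegral_convergent ha
    have h1 : IntegrableOn (fun x : ℝ => Real.exp (-(β * x)) * (β * x) ^ (a - 1))
        (Set.Ioi 0) :=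
      (integrableOn_Ioi_comp_mul_left_iff (fun x : ℝ => Real.exp (-x) * x ^ (a - 1)) 0 hβ).mpr
        (by rw [mul_zero]; exact h0)
    have h2 : IntegrableOn
        (fun x : ℝ => β ^ (1 - a) * (Real.exp (-(β * x)) * (β * x) ^ (a - 1)))
        (Set.Ioi 0) := h1.const_mul (β ^ (1 - a))
    refine MeasureTheory.IntegrableOn.congr_fun h2 (fun x hx => ?_) measurableSet_Ioi
    rw [Real.mul_rpow hβ.le (le_of_lt hx)]
    linear_combination (x ^ (a - 1) * Real.exp (-(β * x))) * hpow
  have hintC : IntegrableOn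
      (fun t : ℝ => Real.log t * (t ^ (a - 1) * Real.exp (-(β * t)))) (Set.Ioi 0) := by
    refine IntegrableOn.congr_fun ?_ hx measurableSet_Ioi
    exact (hcomp.const_mul _).sub (hGi.const_mul _)
  refine ⟨hintC, ?_⟩
  have hval : ∫ x in Set.Ioi (0 : ℝ), g (β * x) = β⁻¹ * deriv Real.Gamma a := by
    have := MeasureTheory.integral_comp_mul_left_Ioi g 0 hβ
    rw [mul_zero] at this
    rw [this, smul_eq_mul, hder.deriv]
  have hval2 : ∫ x in Set.Ioi (0 : ℝ), x ^ (a - 1) * Real.exp (-(β * x)) =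
      (1 / β) ^ a * Real.Gamma a := Real.integral_rpow_mul_exp_neg_mul_Ioi ha hβ
  calc ∫ t in Set.Ioi (0 : ℝ), Real.log t * (t ^ (a - 1) * Real.exp (-(β * t)))
      = ∫ x in Set.Ioi (0 : ℝ),
          (β ^ (1 - a) * g (β * x) - Real.log β * (x ^ (a - 1) * Real.exp (-(β * x)))) :=
        (setIntegral_congr_fun measurableSet_Ioi hx).symm
    _ = (β ^ (1 - a) * ∫ x in Set.Ioi (0 : ℝ), g (β * x)) -
          Real.log β * ∫ x in Set.Ioi (0 : ℝ), x ^ (a - 1) * Real.exp (-(β * x)) := by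
        rw [integral_sub (hcomp.const_mul _) (hGi.const_mul _),
          setIntegral_Ioi_const_mul (β ^ (1 - a)) (fun x => g (β * x)),
          setIntegral_Ioi_const_mul (Real.log β)
            (fun x => x ^ (a - 1) * Real.exp (-(β * x)))]
    _ = (deriv Real.Gamma a - Real.Gamma a * Real.log β) / β ^ a := by
        have e1 : β ^ (1 - a) * β⁻¹ = (β ^ a)⁻¹ := by
          rw [← Real.rpow_neg_one β, ← Real.rpow_add hβ, ← Real.rpow_neg hβ.le]
          congr 1
          ring
        have e2 : (1 / β) ^ a = (β ^ a)⁻¹ := by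
          rw [one_div, Real.inv_rpow hβ.le]
        have hβa : β ^ a ≠ 0 := (Real.rpow_pos_of_pos hβ a).ne'
        rw [hval, hval2, e2, ← mul_assoc, e1]
        field_simp

/-- The digamma function: derivative of `log ∘ Γ`. -/
noncomputable def digamma (z : ℝ) : ℝ :=
  deriv (fun x => Real.log (Real.Gamma x)) z

/-- If `p ~ Gamma(a, b)` and given `p`, `c ~ Poisson(λ p)`, then
`E[log p · 1{c ≥ 1}] = (ψ(a) - log b)(1 - (1+λ/b)^(-a)) + log(1+λ/b) (1+λ/b)^(-a)`,
where `ψ` is the digamma function. -/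
theorem gamma_poisson_log_mass (a b lam : ℝ)
    (ha : 0 < a) (hb : 0 < b) (hlam : 0 < lam) :
    (∫ t in Set.Ioi (0 : ℝ),
        Real.log t * (1 - Real.exp (-(lam * t))) *
          (b ^ a * t ^ (a - 1) * Real.exp (-(b * t)) / Real.Gamma a)) =
      (digamma a - Real.log b) * (1 - (1 + lam / b) ^ (-a)) +
        Real.log (1 + lam / b) * (1 + lam / b) ^ (-a) := by
  have hG : 0 < Real.Gamma a := Real.Gamma_pos_of_pos ha
  have hbl : 0 < b + lam := by linarith
  set D := deriv Real.Gamma a with hD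
  -- digamma a = D / Γ a
  have hdig : digamma a = D / Real.Gamma a := by
    have hdiff : DifferentiableAt ℝ Real.Gamma a := by
      refine Real.differentiableAt_Gamma fun m => ?_
      have : (0 : ℝ) ≤ m := Nat.cast_nonneg m
      intro h; rw [h] at ha; linarith
    have := (hdiff.hasDerivAt.log hG.ne').deriv
    simpa [digamma] using this
  obtain ⟨hi1, hv1⟩ := integral_log_rpow_exp a ha hb
  obtain ⟨hi2, hv2⟩ := integral_log_rpow_exp a ha hbl
  -- pointwise rewriting of the integrand
  have hx : ∀ t ∈ Set.Ioi (0 : ℝ),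
      Real.log t * (1 - Real.exp (-(lam * t))) *
          (b ^ a * t ^ (a - 1) * Real.exp (-(b * t)) / Real.Gamma a) =
        (b ^ a / Real.Gamma a) * (Real.log t * (t ^ (a - 1) * Real.exp (-(b * t)))) -
          (b ^ a / Real.Gamma a) * (Real.log t * (t ^ (a - 1) * Real.exp (-((b + lam) * t)))) := by
    intro t _
    have he : Real.exp (-(lam * t)) * Real.exp (-(b * t)) = Real.exp (-((b + lam) * t)) := by
      rw [← Real.exp_add]; ring_nf
    rw [← he]; ring
  have hsplit : (∫ t in Set.Ioi (0 : ℝ),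
      Real.log t * (1 - Real.exp (-(lam * t))) *
        (b ^ a * t ^ (a - 1) * Real.exp (-(b * t)) / Real.Gamma a)) =
      (b ^ a / Real.Gamma a) * ((D - Real.Gamma a * Real.log b) / b ^ a) -
        (b ^ a / Real.Gamma a) * ((D - Real.Gamma a * Real.log (b + lam)) / (b + lam) ^ a) := by
    rw [setIntegral_congr_fun measurableSet_Ioi hx,
      integral_sub (hi1.const_mul _) (hi2.const_mul _),
      setIntegral_Ioi_const_mul (b ^ a / Real.Gamma a)
        (fun t => Real.log t * (t ^ (a - 1) * Real.exp (-(b * t)))),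
      setIntegral_Ioi_const_mul (b ^ a / Real.Gamma a)
        (fun t => Real.log t * (t ^ (a - 1) * Real.exp (-((b + lam) * t)))),
      hv1, hv2]
  rw [hsplit, hdig]
  -- rewrite the RHS
  have h1 : 1 + lam / b = (b + lam) / b := by field_simp
  have hr : (1 + lam / b) ^ (-a) = b ^ a / (b + lam) ^ a := by
    rw [h1, Real.div_rpow hbl.le hb.le, Real.rpow_neg hbl.le, Real.rpow_neg hb.le]
    have h2 : (0 : ℝ) < b ^ a := Real.rpow_pos_of_pos hb a
    have h3 : (0 : ℝ) < (b + lam) ^ a := Real.rpow_pos_of_pos hbl a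
    field_simp
  have hlog : Real.log (1 + lam / b) = Real.log (b + lam) - Real.log b := by
    rw [h1, Real.log_div hbl.ne' hb.ne']
  rw [hr, hlog]
  have h2 : (0 : ℝ) < b ^ a := Real.rpow_pos_of_pos hb a
  have h3 : (0 : ℝ) < (b + lam) ^ a := Real.rpow_pos_of_pos hbl a
  field_simp
  ring
end
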